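/- arXiv:2408.00227 — 9 statements merged into one kernel-verified Lean document; each statement's English description precedes it below -/
import Mathlib

section
/- Let c be a Monge edge-length function on the complete DAG on {s,...,N}. Let P = (u_0,...,u_{m₁}) and Q = (v_0,...,v_{m₂}) be paths with 1 ≤ m₁ ≤ m₂, u_0 ≤ v_0 < v_{m₂} ≤ u_{m₁}, and let m ∈ [m₁, m₂]. Define k as the least index in [1, m₁] with u_k ≥ v_{m-m₁+k}, and form the swapped paths Q⊕_m P = (v_0,...,v_{m-m₁+k-1}, u_k,...,u_{m₁}) and Q⊖_m P = (u_0,...,u_{k-1}, v_{m-m₁+k},...,v_{m₂}). Then Q⊕_m P is an m-link path from v_0 to u_{m₁}, Q⊖_m P is an (m₁+m₂-m)-link path from u_0 to v_{m₂}, and c(P) + c(Q) ≥ c(Q⊕_m P) + c(Q⊖_m P). -/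
/-- A Monge (submodular) edge-length function on the complete DAG on `{s,...,N}`. -/
def IsMonge (s N : ℕ) (c : ℕ → ℕ → ℝ) : Prop :=
  ∀ i₁ i₂ j₂ j₁ : ℕ, s ≤ i₁ → i₁ < i₂ → i₂ < j₂ → j₂ < j₁ → j₁ ≤ N →
    c i₁ j₂ + c i₂ j₁ ≤ c i₁ j₁ + c i₂ j₂

/-- `v 0, v 1, ..., v m` is an `m`-link path from `a` to `b` inside `{s,...,N}`. -/
def IsPath (s N a b m : ℕ) (v : ℕ → ℕ) : Prop :=
  v 0 = a ∧ v m = b ∧ (∀ k < m, v k < v (k + 1)) ∧ s ≤ a ∧ b ≤ N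

/-- The length of the `m`-link path `v 0, ..., v m` under edge lengths `c`. -/
def pathLen (c : ℕ → ℕ → ℝ) (m : ℕ) (v : ℕ → ℕ) : ℝ :=
  ∑ k ∈ Finset.range m, c (v k) (v (k + 1))

/-- The set of lengths of `m`-link `a`-`b` paths in the complete DAG on `{s,...,N}`. -/
def pathLens (s N a b m : ℕ) (c : ℕ → ℕ → ℝ) : Set ℝ :=
  {x | ∃ v, IsPath s N a b m v ∧ pathLen c m v = x}

/-- The set of link counts of shortest `s`-`n` paths in `G(lam)`
    (the graph with `lam` subtracted from every edge length). -/
def DSet (s N n : ℕ) (c : ℕ → ℕ → ℝ) (lam : ℝ) : Set ℕ :=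
  {m | ∃ v, IsPath s N s n m v ∧
    ∀ m' w, IsPath s N s n m' w →
      pathLen c m v - m * lam ≤ pathLen c m' w - m' * lam}

/-- The set of lengths of all `s`-`n` paths (any number of links). -/
def allLens (s N n : ℕ) (c : ℕ → ℕ → ℝ) : Set ℝ :=
  {x | ∃ m v, IsPath s N s n m v ∧ pathLen c m v = x}

/-- Helper: a path's node function is monotone on `[0,m]`. -/
lemma path_mono_le {v : ℕ → ℕ} {m : ℕ} (h : ∀ k < m, v k < v (k + 1)) :
    ∀ i j, i ≤ j → j ≤ m → v i ≤ v j := by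
  intro i j hij hjm
  induction j with
  | zero => interval_cases i; rfl
  | succ n ih =>
    rcases Nat.eq_or_lt_of_le hij with rfl | h'
    · exact le_rfl
    · exact le_trans (ih (by omega) (by omega)) (le_of_lt (h n (by omega)))

/-- Helper: split a range sum into a prefix, a middle term, and a shifted suffix. -/
lemma sum_split3 (f : ℕ → ℝ) {a b n : ℕ} (h : n = a + 1 + b) :
    ∑ i ∈ Finset.range n, f i =
      (∑ i ∈ Finset.range a, f i) + f a + ∑ i ∈ Finset.range b, f (a + 1 + i) := by
  subst h
  rw [Finset.sum_range_add, Finset.sum_range_succ]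

/-- Path swapping: `Q ⊕ₘ P` is an `m`-link `v 0`-`u m₁` path, `Q ⊖ₘ P` is an
`(m₁+m₂-m)`-link `u 0`-`v m₂` path, and the sum of their lengths is at most
`c(P) + c(Q)`. -/
theorem stmt3 (s N : ℕ) (c : ℕ → ℕ → ℝ) (hc : IsMonge s N c)
    (u v : ℕ → ℕ) (m₁ m₂ m k : ℕ)
    (h1 : 1 ≤ m₁) (h12 : m₁ ≤ m₂) (hmlo : m₁ ≤ m) (hmhi : m ≤ m₂)
    (hP : IsPath s N (u 0) (u m₁) m₁ u) (hQ : IsPath s N (v 0) (v m₂) m₂ v)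
    (h0 : u 0 ≤ v 0) (hne : v 0 < v m₂) (hend : v m₂ ≤ u m₁)
    (hk : IsLeast {k | 1 ≤ k ∧ k ≤ m₁ ∧ v (m - m₁ + k) ≤ u k} k) :
    IsPath s N (v 0) (u m₁) m
      (fun i => if i < m - m₁ + k then v i else u (i - (m - m₁))) ∧
    IsPath s N (u 0) (v m₂) (m₁ + m₂ - m)
      (fun i => if i < k then u i else v (i + (m - m₁))) ∧
    pathLen c m (fun i => if i < m - m₁ + k then v i else u (i - (m - m₁))) +
      pathLen c (m₁ + m₂ - m) (fun i => if i < k then u i else v (i + (m - m₁)))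
      ≤ pathLen c m₁ u + pathLen c m₂ v := by
  obtain ⟨-, -, hustep, hsu, huN⟩ := hP
  obtain ⟨-, -, hvstep, hsv, hvN⟩ := hQ
  obtain ⟨⟨hk1, hkm₁, hkv⟩, hkmin⟩ := hk
  set K := m - m₁ + k with hK
  have hKm : K ≤ m := by omega
  have hKm₂ : K ≤ m₂ := by omega
  have hK1 : 1 ≤ K := by omega
  -- key order facts
  have hmid : v (K - 1) < v K := by
    have h := hvstep (K - 1) (by omega)
    rwa [show K - 1 + 1 = K by omega] at h
  have hcross : v K ≤ u k := hkv
  have hlow : u (k - 1) ≤ v (K - 1) := by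
    rcases Nat.eq_or_lt_of_le hk1 with rfl | hk2
    · simp only [Nat.sub_self]
      exact le_trans h0 (path_mono_le hvstep 0 (K - 1) (by omega) (by omega))
    · have hnot : ¬ (v (m - m₁ + (k - 1)) ≤ u (k - 1)) := by
        intro hle
        have := hkmin ⟨by omega, by omega, hle⟩
        omega
      have h' := Nat.lt_of_not_le hnot
      rw [show m - m₁ + (k - 1) = K - 1 by omega] at h'
      exact h'.le
  have hsu' : s ≤ u (k - 1) :=
    le_trans hsu (path_mono_le hustep 0 (k - 1) (by omega) (by omega))
  have huN' : u k ≤ N := le_trans (path_mono_le hustep k m₁ hkm₁ le_rfl) huN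
  -- the Monge exchange inequality
  have mon : c (u (k - 1)) (v K) + c (v (K - 1)) (u k) ≤
      c (u (k - 1)) (u k) + c (v (K - 1)) (v K) := by
    rcases eq_or_lt_of_le hlow with he | hlt
    · rw [he]; linarith
    · rcases eq_or_lt_of_le hcross with he2 | hlt2
      · rw [← he2]
      · exact hc (u (k - 1)) (v (K - 1)) (v K) (u k) hsu' hlt hmid hlt2 huN'
  -- the two paths
  refine ⟨?_, ?_, ?_⟩
  · refine ⟨?_, ?_, ?_, hsv, huN⟩
    · simp only [if_pos (show 0 < K by omega)]
    · simp only [if_neg (show ¬ m < K by omega)]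
      rw [show m - (m - m₁) = m₁ by omega]
    · intro i hi
      rcases lt_trichotomy (i + 1) K with h | h | h
      · simp only [if_pos (show i < K by omega), if_pos h]
        exact hvstep i (by omega)
      · simp only [if_pos (show i < K by omega), if_neg (show ¬ i + 1 < K by omega)]
        rw [show i + 1 - (m - m₁) = k by omega, show i = K - 1 by omega]
        exact lt_of_lt_of_le hmid hcross
      · simp only [if_neg (show ¬ i < K by omega), if_neg (show ¬ i + 1 < K by omega)]
        rw [show i + 1 - (m - m₁) = (i - (m - m₁)) + 1 by omega]
        exact hustep _ (by omega)
  · refine ⟨?_, ?_, ?_, hsu, hvN⟩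
    · simp only [if_pos (show 0 < k by omega)]
    · simp only [if_neg (show ¬ m₁ + m₂ - m < k by omega)]
      rw [show m₁ + m₂ - m + (m - m₁) = m₂ by omega]
    · intro i hi
      rcases lt_trichotomy (i + 1) k with h | h | h
      · simp only [if_pos (show i < k by omega), if_pos h]
        exact hustep i (by omega)
      · simp only [if_pos (show i < k by omega), if_neg (show ¬ i + 1 < k by omega)]
        rw [show i + 1 + (m - m₁) = K by omega, show i = k - 1 by omega]
        exact lt_of_le_of_lt hlow hmid
      · simp only [if_neg (show ¬ i < k by omega), if_neg (show ¬ i + 1 < k by omega)]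
        rw [show i + 1 + (m - m₁) = (i + (m - m₁)) + 1 by omega]
        exact hvstep _ (by omega)
  -- the length inequality
  · have hA : pathLen c m (fun i => if i < K then v i else u (i - (m - m₁))) =
        (∑ i ∈ Finset.range (K - 1), c (v i) (v (i + 1))) + c (v (K - 1)) (u k) +
          ∑ i ∈ Finset.range (m₁ - k), c (u (k + i)) (u (k + i + 1)) := by
      rw [pathLen,
        sum_split3 (fun i => c (if i < K then v i else u (i - (m - m₁)))
          (if i + 1 < K then v (i + 1) else u (i + 1 - (m - m₁))))
          (show m = (K - 1) + 1 + (m₁ - k) by omega)]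
      congr 1
      · congr 1
        · refine Finset.sum_congr rfl fun i hi => ?_
          rw [Finset.mem_range] at hi
          simp only [if_pos (show i < K by omega), if_pos (show i + 1 < K by omega)]
        · simp only [if_pos (show K - 1 < K by omega),
            if_neg (show ¬ K - 1 + 1 < K by omega)]
          rw [show K - 1 + 1 - (m - m₁) = k by omega]
      · refine Finset.sum_congr rfl fun i hi => ?_
        rw [Finset.mem_range] at hi
        simp only [if_neg (show ¬ K - 1 + 1 + i < K by omega),
          if_neg (show ¬ K - 1 + 1 + i + 1 < K by omega)]
        rw [show K - 1 + 1 + i - (m - m₁) = k + i by omega,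
          show K - 1 + 1 + i + 1 - (m - m₁) = k + i + 1 by omega]
    have hB : pathLen c (m₁ + m₂ - m) (fun i => if i < k then u i else v (i + (m - m₁))) =
        (∑ i ∈ Finset.range (k - 1), c (u i) (u (i + 1))) + c (u (k - 1)) (v K) +
          ∑ i ∈ Finset.range (m₂ - K), c (v (K + i)) (v (K + i + 1)) := by
      rw [pathLen,
        sum_split3 (fun i => c (if i < k then u i else v (i + (m - m₁)))
          (if i + 1 < k then u (i + 1) else v (i + 1 + (m - m₁))))
          (show m₁ + m₂ - m = (k - 1) + 1 + (m₂ - K) by omega)]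
      congr 1
      · congr 1
        · refine Finset.sum_congr rfl fun i hi => ?_
          rw [Finset.mem_range] at hi
          simp only [if_pos (show i < k by omega), if_pos (show i + 1 < k by omega)]
        · simp only [if_pos (show k - 1 < k by omega),
            if_neg (show ¬ k - 1 + 1 < k by omega)]
          rw [show k - 1 + 1 + (m - m₁) = K by omega]
      · refine Finset.sum_congr rfl fun i hi => ?_
        rw [Finset.mem_range] at hi
        simp only [if_neg (show ¬ k - 1 + 1 + i < k by omega),
          if_neg (show ¬ k - 1 + 1 + i + 1 < k by omega)]
        rw [show k - 1 + 1 + i + (m - m₁) = K + i by omega,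
          show k - 1 + 1 + i + 1 + (m - m₁) = K + i + 1 by omega]
    have hU : pathLen c m₁ u =
        (∑ i ∈ Finset.range (k - 1), c (u i) (u (i + 1))) + c (u (k - 1)) (u k) +
          ∑ i ∈ Finset.range (m₁ - k), c (u (k + i)) (u (k + i + 1)) := by
      rw [pathLen, sum_split3 (fun i => c (u i) (u (i + 1)))
        (show m₁ = (k - 1) + 1 + (m₁ - k) by omega)]
      congr 1
      · congr 1
        rw [show k - 1 + 1 = k by omega]
      · refine Finset.sum_congr rfl fun i _ => ?_
        rw [show k - 1 + 1 + i = k + i by omega]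
    have hV : pathLen c m₂ v =
        (∑ i ∈ Finset.range (K - 1), c (v i) (v (i + 1))) + c (v (K - 1)) (v K) +
          ∑ i ∈ Finset.range (m₂ - K), c (v (K + i)) (v (K + i + 1)) := by
      rw [pathLen, sum_split3 (fun i => c (v i) (v (i + 1)))
        (show m₂ = (K - 1) + 1 + (m₂ - K) by omega)]
      congr 1
      · congr 1
        rw [show K - 1 + 1 = K by omega]
      · refine Finset.sum_congr rfl fun i _ => ?_
        rw [show K - 1 + 1 + i = K + i by omega]
    rw [hA, hB, hU, hV]
    linarith
end

section
/- Let G be a Monge DAG on {s,...,N} and n ∈ {s+1,...,N}. Let d_min(n) and d_max(n) be the least and greatest number of links over all shortest s-n paths. Then for every m with d_min(n) ≤ m ≤ d_max(n), there exists a shortest s-n path with exactly m links; i.e., the set of link counts of shortest s-n paths is the full integer interval [d_min(n), d_max(n)]. -/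
namespace Stmt4Aux

lemma path_lt {s N a b m : ℕ} {v : ℕ → ℕ} (h : IsPath s N a b m v) :
    ∀ l k, k < l → l ≤ m → v k < v l := by
  obtain ⟨-, -, h3, -, -⟩ := h
  intro l
  induction l with
  | zero => intro k hk _; omega
  | succ l ih =>
    intro k hk hl
    rcases Nat.lt_or_ge k l with h' | h'
    · exact lt_trans (ih k h' (by omega)) (h3 l (by omega))
    · have hkl : k = l := by omega
      subst hkl
      exact h3 k (by omega)

lemma exists_max {P : ℕ → Prop} [DecidablePred P] {b : ℕ} (h0 : P 0) :
    ∃ i, i ≤ b ∧ P i ∧ ∀ j, i < j → j ≤ b → ¬ P j :=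
  ⟨Nat.findGreatest P b, Nat.findGreatest_le b,
    Nat.findGreatest_spec (Nat.zero_le b) h0,
    fun _ h1 h2 => Nat.findGreatest_is_greatest h1 h2⟩

lemma sum_split (f : ℕ → ℝ) {i p : ℕ} (h : i + 1 ≤ p) :
    ∑ k ∈ Finset.range p, f k =
      (∑ k ∈ Finset.range i, f k) + f i + ∑ t ∈ Finset.range (p - (i + 1)), f (i + 1 + t) := by
  have hp : p = (i + 1) + (p - (i + 1)) := by omega
  nth_rewrite 1 [hp]
  rw [Finset.sum_range_add, Finset.sum_range_succ]

lemma key (s N n : ℕ) (c : ℕ → ℕ → ℝ) (hc : IsMonge s N c)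
    (hn1 : s + 1 ≤ n) (hn2 : n ≤ N) (p q : ℕ)
    (hp : p ∈ DSet s N n c 0) (hq : q ∈ DSet s N n c 0) (hpq : p + 2 ≤ q) :
    p + 1 ∈ DSet s N n c 0 := by
  obtain ⟨u, hu, humin⟩ := hp
  obtain ⟨w, hw, hwmin⟩ := hq
  have hu0 : u 0 = s := hu.1
  have hupn : u p = n := hu.2.1
  have hw0 : w 0 = s := hw.1
  have hwq : w q = n := hw.2.1
  have hpgt : 1 ≤ p := by
    by_contra h
    have hp0 : p = 0 := by omega
    rw [hp0, hu0] at hupn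
    omega
  -- find the splice index
  have hP0 : u 0 ≤ w (0 + 1) := by
    rw [hu0, ← hw0]
    exact le_of_lt (path_lt hw 1 0 Nat.one_pos (by omega))
  obtain ⟨i, hi_le, hi_spec, hi_max⟩ :=
    exists_max (P := fun i => u i ≤ w (i + 1)) (b := p - 1) hP0
  have hiq : i + 2 ≤ q := by omega
  have hi1p : i + 1 ≤ p := by omega
  have hlt : w (i + 2) < u (i + 1) := by
    by_contra hcon
    push_neg at hcon
    rcases Nat.lt_or_ge (i + 1) p with hc1 | hc1
    · exact hi_max (i + 1) (by omega) (by omega) hcon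
    · have hip : i + 1 = p := by omega
      have hx : w (i + 2) < w q := path_lt hw q (i + 2) (by omega) le_rfl
      rw [hwq] at hx
      rw [hip, hupn] at hcon
      omega
  have h2 : w (i + 1) < w (i + 2) := path_lt hw (i + 2) (i + 1) (by omega) hiq
  -- the two new paths
  set v1 : ℕ → ℕ := fun k => if k ≤ i then u k else w (k + 1) with hv1def
  set v2 : ℕ → ℕ := fun k => if k ≤ i + 1 then w k else u (k - 1) with hv2def
  have hv1e1 : ∀ k, k ≤ i → v1 k = u k := fun k hk => if_pos hk
  have hv1e2 : ∀ k, i < k → v1 k = w (k + 1) := fun k hk => if_neg (by omega)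
  have hv2e1 : ∀ k, k ≤ i + 1 → v2 k = w k := fun k hk => if_pos hk
  have hv2e2 : ∀ k, i + 1 < k → v2 k = u (k - 1) := fun k hk => if_neg (by omega)
  have hpath1 : IsPath s N s n (q - 1) v1 := by
    refine ⟨?_, ?_, ?_, le_refl s, hn2⟩
    · rw [hv1e1 0 (Nat.zero_le _), hu0]
    · rw [hv1e2 (q - 1) (by omega), show q - 1 + 1 = q from by omega, hwq]
    · intro k hk
      rcases Nat.lt_or_ge k i with hki | hki
      · rw [hv1e1 k (by omega), hv1e1 (k + 1) (by omega)]
        exact path_lt hu (k + 1) k (by omega) (by omega)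
      · rcases Nat.eq_or_lt_of_le hki with hki' | hki'
        · -- i = k
          rw [hv1e1 k (le_of_eq hki'.symm), hv1e2 (k + 1) (by omega), ← hki']
          exact lt_of_le_of_lt hi_spec h2
        · rw [hv1e2 k (by omega), hv1e2 (k + 1) (by omega)]
          exact path_lt hw (k + 1 + 1) (k + 1) (by omega) (by omega)
  have hpath2 : IsPath s N s n (p + 1) v2 := by
    refine ⟨?_, ?_, ?_, le_refl s, hn2⟩
    · rw [hv2e1 0 (Nat.zero_le _), hw0]
    · rw [hv2e2 (p + 1) (by omega), show p + 1 - 1 = p from by omega, hupn]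
    · intro k hk
      rcases Nat.lt_or_ge k (i + 1) with hki | hki
      · rw [hv2e1 k (by omega), hv2e1 (k + 1) (by omega)]
        exact path_lt hw (k + 1) k (by omega) (by omega)
      · rcases Nat.eq_or_lt_of_le hki with hki' | hki'
        · -- i + 1 = k
          rw [hv2e1 k (le_of_eq hki'.symm), hv2e2 (k + 1) (by omega),
            show k + 1 - 1 = k from by omega, ← hki']
          exact lt_trans h2 hlt
        · rw [hv2e2 k (by omega), hv2e2 (k + 1) (by omega),
            show k + 1 - 1 = k from by omega]
          exact path_lt hu k (k - 1) (by omega) (by omega)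
  -- length identities
  have hulen : pathLen c p u =
      (∑ k ∈ Finset.range i, c (u k) (u (k + 1))) + c (u i) (u (i + 1))
        + ∑ t ∈ Finset.range (p - (i + 1)), c (u (i + 1 + t)) (u (i + 1 + t + 1)) :=
    sum_split (fun k => c (u k) (u (k + 1))) hi1p
  have hwlen : pathLen c q w =
      (∑ k ∈ Finset.range (i + 1), c (w k) (w (k + 1))) + c (w (i + 1)) (w (i + 1 + 1))
        + ∑ t ∈ Finset.range (q - (i + 1 + 1)), c (w (i + 1 + 1 + t)) (w (i + 1 + 1 + t + 1)) :=
    sum_split (fun k => c (w k) (w (k + 1))) (show (i + 1) + 1 ≤ q from by omega)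
  rw [show i + 1 + 1 = i + 2 from by omega] at hwlen
  have hv1len : pathLen c (q - 1) v1 =
      (∑ k ∈ Finset.range i, c (u k) (u (k + 1))) + c (u i) (w (i + 2))
        + ∑ t ∈ Finset.range (q - (i + 2)), c (w (i + 2 + t)) (w (i + 2 + t + 1)) := by
    have e : pathLen c (q - 1) v1 =
        (∑ k ∈ Finset.range i, c (v1 k) (v1 (k + 1))) + c (v1 i) (v1 (i + 1))
          + ∑ t ∈ Finset.range (q - 1 - (i + 1)), c (v1 (i + 1 + t)) (v1 (i + 1 + t + 1)) :=
      sum_split (fun k => c (v1 k) (v1 (k + 1))) (show i + 1 ≤ q - 1 from by omega)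
    have hH : (∑ k ∈ Finset.range i, c (v1 k) (v1 (k + 1)))
        = ∑ k ∈ Finset.range i, c (u k) (u (k + 1)) :=
      Finset.sum_congr rfl fun k hk => by
        simp only [Finset.mem_range] at hk
        rw [hv1e1 k (by omega), hv1e1 (k + 1) (by omega)]
    have hM : c (v1 i) (v1 (i + 1)) = c (u i) (w (i + 2)) := by
      rw [hv1e1 i le_rfl, hv1e2 (i + 1) (by omega), show i + 1 + 1 = i + 2 from by omega]
    have hT : (∑ t ∈ Finset.range (q - (i + 2)), c (v1 (i + 1 + t)) (v1 (i + 1 + t + 1)))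
        = ∑ t ∈ Finset.range (q - (i + 2)), c (w (i + 2 + t)) (w (i + 2 + t + 1)) :=
      Finset.sum_congr rfl fun t _ => by
        rw [hv1e2 (i + 1 + t) (by omega), hv1e2 (i + 1 + t + 1) (by omega),
          show i + 1 + t + 1 = i + 2 + t from by omega]
    rw [e, show q - 1 - (i + 1) = q - (i + 2) from by omega, hH, hM, hT]
  have hv2len : pathLen c (p + 1) v2 =
      (∑ k ∈ Finset.range (i + 1), c (w k) (w (k + 1))) + c (w (i + 1)) (u (i + 1))
        + ∑ t ∈ Finset.range (p - (i + 1)), c (u (i + 1 + t)) (u (i + 1 + t + 1)) := by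
    have e : pathLen c (p + 1) v2 =
        (∑ k ∈ Finset.range (i + 1), c (v2 k) (v2 (k + 1))) + c (v2 (i + 1)) (v2 (i + 1 + 1))
          + ∑ t ∈ Finset.range (p + 1 - (i + 1 + 1)), c (v2 (i + 1 + 1 + t)) (v2 (i + 1 + 1 + t + 1)) :=
      sum_split (fun k => c (v2 k) (v2 (k + 1))) (show (i + 1) + 1 ≤ p + 1 from by omega)
    have hH : (∑ k ∈ Finset.range (i + 1), c (v2 k) (v2 (k + 1)))
        = ∑ k ∈ Finset.range (i + 1), c (w k) (w (k + 1)) :=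
      Finset.sum_congr rfl fun k hk => by
        simp only [Finset.mem_range] at hk
        rw [hv2e1 k (by omega), hv2e1 (k + 1) (by omega)]
    have hM : c (v2 (i + 1)) (v2 (i + 1 + 1)) = c (w (i + 1)) (u (i + 1)) := by
      rw [hv2e1 (i + 1) le_rfl, hv2e2 (i + 1 + 1) (by omega),
        show i + 1 + 1 - 1 = i + 1 from by omega]
    have hT : (∑ t ∈ Finset.range (p - (i + 1)), c (v2 (i + 1 + 1 + t)) (v2 (i + 1 + 1 + t + 1)))
        = ∑ t ∈ Finset.range (p - (i + 1)), c (u (i + 1 + t)) (u (i + 1 + t + 1)) :=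
      Finset.sum_congr rfl fun t _ => by
        rw [hv2e2 (i + 1 + 1 + t) (by omega), hv2e2 (i + 1 + 1 + t + 1) (by omega),
          show i + 1 + 1 + t - 1 = i + 1 + t from by omega,
          show i + 1 + 1 + t + 1 - 1 = i + 1 + t + 1 from by omega]
    rw [e, show p + 1 - (i + 1 + 1) = p - (i + 1) from by omega, hH, hM, hT]
  -- the exchange (Monge) inequality
  have hmonge : c (u i) (w (i + 2)) + c (w (i + 1)) (u (i + 1)) ≤
      c (u i) (u (i + 1)) + c (w (i + 1)) (w (i + 2)) := by
    rcases Nat.eq_or_lt_of_le hi_spec with heq | hlt'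
    · rw [heq]
      linarith
    · have hs : s ≤ u i := by
        rcases Nat.eq_zero_or_pos i with h0 | h0
        · rw [h0, hu0]
        · rw [← hu0]; exact le_of_lt (path_lt hu i 0 h0 (by omega))
      have hN : u (i + 1) ≤ N := by
        rcases Nat.eq_or_lt_of_le hi1p with h0 | h0
        · rw [h0, hupn]; exact hn2
        · calc u (i + 1) ≤ u p := le_of_lt (path_lt hu p (i + 1) h0 le_rfl)
            _ = n := hupn
            _ ≤ N := hn2
      exact hc (u i) (w (i + 1)) (w (i + 2)) (u (i + 1)) hs hlt' h2 hlt hN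
  have hcost : pathLen c (q - 1) v1 + pathLen c (p + 1) v2 ≤
      pathLen c p u + pathLen c q w := by
    rw [hulen, hwlen, hv1len, hv2len]
    linarith
  -- conclude
  refine ⟨v2, hpath2, ?_⟩
  intro m' w' hw'
  have h5 := humin (q - 1) v1 hpath1
  have h6 := hwmin m' w' hw'
  simp only [mul_zero, sub_zero] at h5 h6 ⊢
  linarith

end Stmt4Aux

/-- The set of link counts of shortest `s`-`n` paths is a full integer interval. -/
theorem stmt4 (s N n : ℕ) (c : ℕ → ℕ → ℝ) (hc : IsMonge s N c)
    (hn1 : s + 1 ≤ n) (hn2 : n ≤ N) (dmin dmax : ℕ)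
    (h1 : IsLeast (DSet s N n c 0) dmin) (h2 : IsGreatest (DSet s N n c 0) dmax) :
    ∀ m, dmin ≤ m → m ≤ dmax → m ∈ DSet s N n c 0 := by
  intro m hm1 hm2
  induction m, hm1 using Nat.le_induction with
  | base => exact h1.1
  | succ m hm ih =>
    have hmS : m ∈ DSet s N n c 0 := ih (by omega)
    rcases Nat.lt_or_ge (m + 1) dmax with hlt | hge
    · exact Stmt4Aux.key s N n c hc hn1 hn2 m dmax hmS h2.1 (by omega)
    · have : m + 1 = dmax := by omega
      rw [this]
      exact h2.1
end

section
/- Let G be a Monge DAG on {s,...,N} and let f(m,n) denote the minimum length of all m-link s-n paths, defined for n ∈ {s+1,...,N} and 1 ≤ m ≤ n-s. Then for all N ≥ n₁ ≥ n₂ > s, all 1 ≤ m₁ ≤ m₂ ≤ n₂ - s, and all m ∈ [m₁, m₂]: f(m₁,n₁) + f(m₂,n₂) ≥ f(m,n₁) + f(m₁+m₂-m, n₂). In particular, f is submodular on the lattice {(m,n) : n ∈ [s+1,N], m ∈ [1, n-s]}. -/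
lemma pathMono {m : ℕ} {v : ℕ → ℕ} (h : ∀ k < m, v k < v (k + 1))
    {a b : ℕ} (hab : a < b) (hbm : b ≤ m) : v a < v b := by
  induction b with
  | zero => omega
  | succ n ih =>
    rcases eq_or_lt_of_le (Nat.lt_succ_iff.mp hab) with h' | h'
    · exact h' ▸ h a (by omega)
    · exact lt_trans (ih h' (by omega)) (h n (by omega))

lemma pathMonoLe {m : ℕ} {v : ℕ → ℕ} (h : ∀ k < m, v k < v (k + 1))
    {a b : ℕ} (hab : a ≤ b) (hbm : b ≤ m) : v a ≤ v b := by
  rcases eq_or_lt_of_le hab with h' | h'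
  · exact h' ▸ le_rfl
  · exact le_of_lt (pathMono h h' hbm)

lemma sum_split (g : ℕ → ℝ) {a b : ℕ} (h : a + 1 ≤ b) :
    ∑ t ∈ Finset.range b, g t =
      (∑ t ∈ Finset.range a, g t) + g a + ∑ t ∈ Finset.range (b - (a + 1)), g (a + 1 + t) := by
  obtain ⟨r, rfl⟩ : ∃ r, b = a + 1 + r := ⟨b - (a + 1), by omega⟩
  rw [Finset.sum_range_add, Finset.sum_range_succ, show a + 1 + r - (a + 1) = r by omega]


/-- The four-point inequality for the minimum lengths `f(m,n)` of `m`-link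
`s`-`n` paths; in particular `f` is submodular on its lattice. -/
theorem stmt5 (s N : ℕ) (c : ℕ → ℕ → ℝ) (hc : IsMonge s N c)
    (f : ℕ → ℕ → ℝ)
    (hf : ∀ k j, 1 ≤ k → s + k ≤ j → j ≤ N → IsLeast (pathLens s N s j k c) (f k j)) :
    ∀ n₁ n₂ m₁ m₂ m, s < n₂ → n₂ ≤ n₁ → n₁ ≤ N → 1 ≤ m₁ → m₁ ≤ m₂ → s + m₂ ≤ n₂ →
      m₁ ≤ m → m ≤ m₂ →
      f m n₁ + f (m₁ + m₂ - m) n₂ ≤ f m₁ n₁ + f m₂ n₂ := by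
  intro n₁ n₂ m₁ m₂ m hsn₂ hn₂n₁ hn₁N hm₁1 hm₁m₂ hm₂n₂ hm₁m hmm₂
  obtain ⟨⟨u, hu, huLen⟩, -⟩ := hf m₁ n₁ hm₁1 (by omega) hn₁N
  obtain ⟨⟨w, hw, hwLen⟩, -⟩ := hf m₂ n₂ (by omega) hm₂n₂ (by omega)
  obtain ⟨-, hlbA⟩ := hf m n₁ (by omega) (by omega) hn₁N
  obtain ⟨-, hlbB⟩ := hf (m₁ + m₂ - m) n₂ (by omega) (by omega) (by omega)
  obtain ⟨hu0, hum, humono, -, -⟩ := hu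
  obtain ⟨hw0, hwm, hwmono, -, -⟩ := hw
  -- degenerate case
  by_cases hdeg : u m₁ ≤ w m
  · have h1 : w m ≤ n₂ := hwm ▸ pathMonoLe hwmono hmm₂ le_rfl
    have h2 : n₁ ≤ w m := hum ▸ hdeg
    have hmeq : m = m₂ := by
      by_contra hne
      have := pathMono hwmono (show m < m₂ by omega) le_rfl
      omega
    have hneq : n₁ = n₂ := by omega
    have hM : m₁ + m₂ - m = m₁ := by omega
    rw [hM, hmeq, hneq]
    linarith
  push_neg at hdeg
  -- main case: find crossing index
  set d := m - m₁ with hd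
  have hdm : d + m₁ = m := by omega
  have hex : ∃ i, w (d + i) ≤ u i := ⟨m₁, by rw [hdm]; exact le_of_lt hdeg⟩
  have key : ∃ k, d ≤ k ∧ k + 1 ≤ m ∧ w k < u (k - d + 1) ∧ u (k - d) < w (k + 1) ∧
      c (w k) (u (k - d + 1)) + c (u (k - d)) (w (k + 1)) ≤
        c (u (k - d)) (u (k - d + 1)) + c (w k) (w (k + 1)) := by
    classical
    have hfind := Nat.find_spec hex
    have hile : Nat.find hex ≤ m₁ := Nat.find_min' hex (by rw [hdm]; exact le_of_lt hdeg)
    cases hcase : Nat.find hex with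
    | zero =>
      rw [hcase] at hfind
      have hwd : w d ≤ s := by rwa [hu0] at hfind
      have hsd : s ≤ w d := hw0 ▸ pathMonoLe hwmono (Nat.zero_le d) (by omega)
      have heq : w d = u 0 := by rw [hu0]; omega
      refine ⟨d, le_rfl, by omega, ?_, ?_, ?_⟩
      · rw [Nat.sub_self, heq]
        exact pathMono humono (by omega) (by omega)
      · rw [Nat.sub_self, ← heq]
        exact pathMono hwmono (by omega) (by omega)
      · apply le_of_eq
        rw [Nat.sub_self, heq]
    | succ i =>
      rw [hcase] at hfind hile
      have hlt : u i < w (d + i) := by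
        have := Nat.find_min hex (by omega : i < Nat.find hex)
        omega
      have hwinc : w (d + i) < w (d + i + 1) := hwmono _ (by omega)
      refine ⟨d + i, by omega, by omega, ?_, ?_, ?_⟩
      · rw [show d + i - d = i by omega]
        have hfind' : w (d + i + 1) ≤ u (i + 1) := hfind
        omega
      · rw [show d + i - d = i by omega]
        omega
      · rw [show d + i - d = i by omega]
        rcases eq_or_lt_of_le hfind with he | hlt2
        · have he' : w (d + i + 1) = u (i + 1) := he
          rw [← he']
          exact le_of_eq (by ring)
        · have hs : s ≤ u i := hu0 ▸ pathMonoLe humono (Nat.zero_le i) (by omega)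
          have hN : u (i + 1) ≤ N := le_trans (hum ▸ pathMonoLe humono (by omega) le_rfl) hn₁N
          have hlt2' : w (d + i + 1) < u (i + 1) := hlt2
          have := hc (u i) (w (d + i)) (w (d + i + 1)) (u (i + 1)) hs hlt hwinc hlt2' hN
          linarith
  obtain ⟨k, hdk, hk1m, hjun1, hjun2, hexch⟩ := key
  set j := k - d with hjdef
  have hjd : j + d = k := by omega
  have hjm₁ : j + 1 ≤ m₁ := by omega
  set M₂ := m₁ + m₂ - m with hM₂
  have hM₂d : M₂ + d = m₂ := by omega
  have hjM₂ : j + 1 ≤ M₂ := by omega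
  set A : ℕ → ℕ := fun t => if t ≤ k then w t else u (t - d) with hAdef
  set B : ℕ → ℕ := fun t => if t ≤ j then u t else w (t + d) with hBdef
  have hA1 : ∀ t, t ≤ k → A t = w t := fun t ht => if_pos ht
  have hA2 : ∀ t, k < t → A t = u (t - d) := fun t ht => if_neg (by omega)
  have hB1 : ∀ t, t ≤ j → B t = u t := fun t ht => if_pos ht
  have hB2 : ∀ t, j < t → B t = w (t + d) := fun t ht => if_neg (by omega)
  have hApath : IsPath s N s n₁ m A := by
    refine ⟨by rw [hA1 0 (by omega)]; exact hw0, ?_, ?_, le_rfl, by omega⟩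
    · rw [hA2 m (by omega), show m - d = m₁ by omega]; exact hum
    · intro t htm
      rcases lt_trichotomy t k with h | h | h
      · rw [hA1 t (by omega), hA1 (t+1) (by omega)]
        exact hwmono t (by omega)
      · subst h
        rw [hA1 t le_rfl, hA2 (t+1) (by omega), show t + 1 - d = j + 1 by omega]
        exact hjun1
      · rw [hA2 t h, hA2 (t+1) (by omega), show t + 1 - d = (t - d) + 1 by omega]
        exact humono (t - d) (by omega)
  have hBpath : IsPath s N s n₂ M₂ B := by
    refine ⟨by rw [hB1 0 (by omega)]; exact hu0, ?_, ?_, le_rfl, by omega⟩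
    · rw [hB2 M₂ (by omega), hM₂d]; exact hwm
    · intro t htm
      rcases lt_trichotomy t j with h | h | h
      · rw [hB1 t (by omega), hB1 (t+1) (by omega)]
        exact humono t (by omega)
      · subst h
        rw [hB1 j le_rfl, hB2 (j+1) (by omega), show j + 1 + d = k + 1 by omega]
        exact hjun2
      · rw [hB2 t h, hB2 (t+1) (by omega), show t + 1 + d = (t + d) + 1 by omega]
        exact hwmono (t + d) (by omega)
  set SU1 := ∑ t ∈ Finset.range j, c (u t) (u (t + 1)) with hSU1
  set SU2 := ∑ t ∈ Finset.range (m₁ - (j + 1)), c (u (j + 1 + t)) (u (j + 1 + t + 1)) with hSU2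
  set SW1 := ∑ t ∈ Finset.range k, c (w t) (w (t + 1)) with hSW1
  set SW2 := ∑ t ∈ Finset.range (m₂ - (k + 1)), c (w (k + 1 + t)) (w (k + 1 + t + 1)) with hSW2
  have hlenU : pathLen c m₁ u = SU1 + c (u j) (u (j + 1)) + SU2 := sum_split _ hjm₁
  have hlenW : pathLen c m₂ w = SW1 + c (w k) (w (k + 1)) + SW2 := sum_split _ (by omega)
  have hlenA : pathLen c m A = SW1 + c (w k) (u (j + 1)) + SU2 := by
    rw [pathLen, sum_split _ (show k + 1 ≤ m by omega)]
    congr 1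
    · congr 1
      · exact Finset.sum_congr rfl fun t ht => by
          rw [hA1 t (by have := Finset.mem_range.mp ht; omega),
            hA1 (t+1) (by have := Finset.mem_range.mp ht; omega)]
      · rw [hA1 k le_rfl, hA2 (k+1) (by omega), show k + 1 - d = j + 1 by omega]
    · rw [show m - (k + 1) = m₁ - (j + 1) by omega]
      exact Finset.sum_congr rfl fun t ht => by
        rw [hA2 (k + 1 + t) (by omega), hA2 (k + 1 + t + 1) (by omega),
          show k + 1 + t - d = j + 1 + t by omega,
          show k + 1 + t + 1 - d = j + 1 + t + 1 by omega]
  have hlenB : pathLen c M₂ B = SU1 + c (u j) (w (k + 1)) + SW2 := by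
    rw [pathLen, sum_split _ hjM₂]
    congr 1
    · congr 1
      · exact Finset.sum_congr rfl fun t ht => by
          rw [hB1 t (by have := Finset.mem_range.mp ht; omega),
            hB1 (t+1) (by have := Finset.mem_range.mp ht; omega)]
      · rw [hB1 j le_rfl, hB2 (j+1) (by omega), show j + 1 + d = k + 1 by omega]
    · rw [show M₂ - (j + 1) = m₂ - (k + 1) by omega]
      exact Finset.sum_congr rfl fun t ht => by
        rw [hB2 (j + 1 + t) (by omega), hB2 (j + 1 + t + 1) (by omega),
          show j + 1 + t + d = k + 1 + t by omega,
          show j + 1 + t + 1 + d = k + 1 + t + 1 by omega]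
  have h1 : f m n₁ ≤ pathLen c m A := hlbA ⟨A, hApath, rfl⟩
  have h2 : f M₂ n₂ ≤ pathLen c M₂ B := hlbB ⟨B, hBpath, rfl⟩
  have hexch' : c (w k) (u (j + 1)) + c (u j) (w (k + 1)) ≤
      c (u j) (u (j + 1)) + c (w k) (w (k + 1)) := hexch
  linarith [hlenA ▸ h1, hlenB ▸ h2, hlenU ▸ huLen.symm, hlenW ▸ hwLen.symm]
end

section
/- Let G be a Monge DAG on {s,...,N}. Then both d_min(n) and d_max(n), the least and greatest number of links over all shortest s-n paths, are monotonically nondecreasing in n ∈ {s,...,N} (with d_min(s) = d_max(s) = 0). -/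
lemma path_mono {s N a b m : ℕ} {v : ℕ → ℕ} (h : IsPath s N a b m v) :
    ∀ i j, i ≤ j → j ≤ m → v i ≤ v j := by
  intro i j hij hjm
  induction j with
  | zero =>
    have hi : i = 0 := by omega
    simp [hi]
  | succ j ih =>
    rcases Nat.lt_or_ge i (j + 1) with h1 | h1
    · have h2 := h.2.2.1 j (by omega)
      have h3 := ih (by omega) (by omega)
      omega
    · have : i = j + 1 := by omega
      simp [this]

lemma path_lt {s N a b m : ℕ} {v : ℕ → ℕ} (h : IsPath s N a b m v) :
    ∀ i j, i < j → j ≤ m → v i < v j := by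
  intro i j hij hjm
  have h1 := path_mono h i (j - 1) (by omega) (by omega)
  have h2 := h.2.2.1 (j - 1) (by omega)
  have h3 : j - 1 + 1 = j := by omega
  rw [h3] at h2
  omega

lemma path_self_zero {s N m : ℕ} {v : ℕ → ℕ} (h : IsPath s N s s m v) : m = 0 := by
  by_contra hm
  have := path_lt h 0 m (by omega) le_rfl
  rw [h.1, h.2.1] at this
  omega

lemma pathLen_split (c : ℕ → ℕ → ℝ) (m a : ℕ) (v : ℕ → ℕ) (h2 : a + 1 ≤ m) :
    pathLen c m v = (∑ j ∈ Finset.range a, c (v j) (v (j + 1)))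
      + c (v a) (v (a + 1)) + ∑ j ∈ Finset.Ico (a + 1) m, c (v j) (v (j + 1)) := by
  unfold pathLen
  rw [Finset.range_eq_Ico, ← Finset.sum_Ico_consecutive _ (Nat.zero_le (a + 1)) h2,
    Finset.sum_Ico_succ_top (Nat.zero_le a)]
  rw [Finset.range_eq_Ico]


lemma sum_shift (g : ℕ → ℝ) (a b d : ℕ) :
    ∑ j ∈ Finset.Ico a b, g (j + d) = ∑ j ∈ Finset.Ico (a + d) (b + d), g j := by
  rw [Finset.sum_Ico_eq_sum_range, Finset.sum_Ico_eq_sum_range]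
  have h : b + d - (a + d) = b - a := by omega
  rw [h]
  apply Finset.sum_congr rfl
  intro i _
  congr 1
  omega

lemma key_exchange (s N n₁ n₂ m₂ δ : ℕ) (c : ℕ → ℕ → ℝ) (hc : IsMonge s N c)
    (h12 : n₁ ≤ n₂) (h2N : n₂ ≤ N) (hδ : 1 ≤ δ)
    (H1 : (m₂ + δ) ∈ DSet s N n₁ c 0) (H2 : m₂ ∈ DSet s N n₂ c 0) :
    m₂ ∈ DSet s N n₁ c 0 ∧ (m₂ + δ) ∈ DSet s N n₂ c 0 := by
  classical
  obtain ⟨u, hu, humin⟩ := H1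
  obtain ⟨w, hw, hwmin⟩ := H2
  have hu0 : u 0 = s := hu.1
  have hum : u (m₂ + δ) = n₁ := hu.2.1
  have hw0 : w 0 = s := hw.1
  have hwm : w m₂ = n₂ := hw.2.1
  have hsn1 : s ≤ n₁ := by
    rw [← hu0, ← hum]; exact path_mono hu 0 (m₂ + δ) (by omega) le_rfl
  have hm₂ : 1 ≤ m₂ := by
    by_contra h
    have hm0 : m₂ = 0 := by omega
    subst hm0
    have hn2 : n₂ = s := by rw [← hwm, hw0]
    have hn1 : n₁ = s := by omega
    have : (0 + δ) = 0 := path_self_zero (by rw [hn1] at hu; exact hu)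
    omega
  have hPm : u (m₂ + δ) ≤ w m₂ := by rw [hum, hwm]; exact h12
  have hex : ∃ k, u (k + δ) ≤ w k := ⟨m₂, hPm⟩
  obtain ⟨t, htm, htle, htgt⟩ :
      ∃ t, t + 1 ≤ m₂ ∧ u (t + 1 + δ) ≤ w (t + 1) ∧ w t < u (t + δ) := by
    have h0 : ¬ u (0 + δ) ≤ w 0 := by
      have h1 := path_lt hu 0 δ (by omega) (by omega)
      rw [hu0] at h1
      rw [hw0]
      have e0 : 0 + δ = δ := by omega
      rw [e0]
      omega
    have hk1 : 1 ≤ Nat.find hex := by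
      rcases Nat.eq_zero_or_pos (Nat.find hex) with h | h
      · exact absurd (h ▸ Nat.find_spec hex) h0
      · exact h
    have hkle : Nat.find hex ≤ m₂ := Nat.find_min' hex hPm
    refine ⟨Nat.find hex - 1, by omega, ?_, ?_⟩
    · have hsp := Nat.find_spec hex
      have e : Nat.find hex - 1 + 1 = Nat.find hex := by omega
      rw [e]; exact hsp
    · have hnm := Nat.find_min hex (m := Nat.find hex - 1) (by omega)
      omega
  set R : ℕ → ℕ := fun j => if j < t + 1 then w j else u (j + δ) with hR
  set R' : ℕ → ℕ := fun j => if j < t + 1 + δ then u j else w (j - δ) with hR'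
  have hu_lt := path_lt hu
  have hw_lt := path_lt hw
  -- R is a path from s to n₁ with m₂ links
  have hRpath : IsPath s N s n₁ m₂ R := by
    refine ⟨?_, ?_, ?_, le_rfl, le_trans h12 h2N⟩
    · rw [hR]; simp only; rw [if_pos (by omega : (0:ℕ) < t + 1)]; exact hw0
    · rw [hR]; simp only; rw [if_neg (by omega : ¬ m₂ < t + 1)]; exact hum
    · intro j hj
      by_cases h1 : j + 1 < t + 1
      · have h2 : j < t + 1 := by omega
        rw [hR]; simp only; rw [if_pos h1, if_pos h2]
        exact hw.2.2.1 j (by omega)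
      · by_cases h2 : j < t + 1
        · have hjt : j = t := by omega
          rw [hR]; simp only; rw [if_pos h2, if_neg h1]
          subst hjt
          have h3 := hu_lt (j + δ) (j + 1 + δ) (by omega) (by omega)
          omega
        · rw [hR]; simp only; rw [if_neg h1, if_neg h2]
          exact hu_lt (j + δ) (j + 1 + δ) (by omega) (by omega)
  -- R' is a path from s to n₂ with m₂ + δ links
  have hR'path : IsPath s N s n₂ (m₂ + δ) R' := by
    refine ⟨?_, ?_, ?_, le_rfl, h2N⟩
    · rw [hR']; simp only; rw [if_pos (by omega : (0:ℕ) < t + 1 + δ)]; exact hu0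
    · rw [hR']; simp only; rw [if_neg (by omega : ¬ m₂ + δ < t + 1 + δ)]
      have e : m₂ + δ - δ = m₂ := by omega
      rw [e]; exact hwm
    · intro j hj
      by_cases h1 : j + 1 < t + 1 + δ
      · have h2 : j < t + 1 + δ := by omega
        rw [hR']; simp only; rw [if_pos h1, if_pos h2]
        exact hu.2.2.1 j (by omega)
      · by_cases h2 : j < t + 1 + δ
        · have hjt : j = t + δ := by omega
          rw [hR']; simp only; rw [if_pos h2, if_neg h1]
          have e : j + 1 - δ = t + 1 := by omega
          rw [e, hjt]
          have h3 := hu_lt (t + δ) (t + 1 + δ) (by omega) (by omega)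
          omega
        · rw [hR']; simp only; rw [if_neg h1, if_neg h2]
          have h3 := hw.2.2.1 (j - δ) (by omega)
          have e : j - δ + 1 = j + 1 - δ := by omega
          rw [e] at h3
          exact h3
  -- length bookkeeping
  set A : ℝ := ∑ j ∈ Finset.range t, c (w j) (w (j + 1)) with hA
  set B : ℝ := ∑ j ∈ Finset.Ico (t + 1) m₂, c (w j) (w (j + 1)) with hB
  set A' : ℝ := ∑ j ∈ Finset.range (t + δ), c (u j) (u (j + 1)) with hA'
  set B' : ℝ := ∑ j ∈ Finset.Ico (t + δ + 1) (m₂ + δ), c (u j) (u (j + 1)) with hB'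
  have lenw : pathLen c m₂ w = A + c (w t) (w (t + 1)) + B :=
    pathLen_split c m₂ t w htm
  have lenu : pathLen c (m₂ + δ) u = A' + c (u (t + δ)) (u (t + δ + 1)) + B' :=
    pathLen_split c (m₂ + δ) (t + δ) u (by omega)
  have lenR : pathLen c m₂ R = A + c (w t) (u (t + 1 + δ)) + B' := by
    rw [pathLen_split c m₂ t R htm]
    congr 1
    · congr 1
      · rw [hA]
        apply Finset.sum_congr rfl
        intro j hj
        have hj' : j < t := Finset.mem_range.mp hj
        have e1 : R j = w j := by rw [hR]; simp only; rw [if_pos (by omega : j < t + 1)]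
        have e2 : R (j + 1) = w (j + 1) := by
          rw [hR]; simp only; rw [if_pos (by omega : j + 1 < t + 1)]
        rw [e1, e2]
      · have e1 : R t = w t := by rw [hR]; simp only; rw [if_pos (by omega : t < t + 1)]
        have e2 : R (t + 1) = u (t + 1 + δ) := by
          rw [hR]; simp only; rw [if_neg (by omega : ¬ t + 1 < t + 1)]
        rw [e1, e2]
    · have step : ∀ j ∈ Finset.Ico (t + 1) m₂,
          c (R j) (R (j + 1)) = c (u (j + δ)) (u (j + δ + 1)) := by
        intro j hj
        obtain ⟨hj1, hj2⟩ := Finset.mem_Ico.mp hj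
        have e1 : R j = u (j + δ) := by rw [hR]; simp only; rw [if_neg (by omega : ¬ j < t + 1)]
        have e2 : R (j + 1) = u (j + 1 + δ) := by
          rw [hR]; simp only; rw [if_neg (by omega : ¬ j + 1 < t + 1)]
        have e3 : j + 1 + δ = j + δ + 1 := by omega
        rw [e1, e2, e3]
      rw [Finset.sum_congr rfl step, hB']
      have h := sum_shift (fun j => c (u j) (u (j + 1))) (t + 1) m₂ δ
      rw [Nat.add_right_comm t 1 δ] at h
      exact h
  have lenR' : pathLen c (m₂ + δ) R' = A' + c (u (t + δ)) (w (t + 1)) + B := by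
    rw [pathLen_split c (m₂ + δ) (t + δ) R' (by omega)]
    congr 1
    · congr 1
      · rw [hA']
        apply Finset.sum_congr rfl
        intro j hj
        have hj' : j < t + δ := Finset.mem_range.mp hj
        have e1 : R' j = u j := by rw [hR']; simp only; rw [if_pos (by omega : j < t + 1 + δ)]
        have e2 : R' (j + 1) = u (j + 1) := by
          rw [hR']; simp only; rw [if_pos (by omega : j + 1 < t + 1 + δ)]
        rw [e1, e2]
      · have e1 : R' (t + δ) = u (t + δ) := by
          rw [hR']; simp only; rw [if_pos (by omega : t + δ < t + 1 + δ)]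
        have e2 : R' (t + δ + 1) = w (t + 1) := by
          rw [hR']; simp only; rw [if_neg (by omega : ¬ t + δ + 1 < t + 1 + δ)]
          congr 1
          omega
        rw [e1, e2]
    · have step : ∀ j ∈ Finset.Ico (t + δ + 1) (m₂ + δ),
          c (R' j) (R' (j + 1)) = c (w (j - δ)) (w (j - δ + 1)) := by
        intro j hj
        obtain ⟨hj1, hj2⟩ := Finset.mem_Ico.mp hj
        have e1 : R' j = w (j - δ) := by
          rw [hR']; simp only; rw [if_neg (by omega : ¬ j < t + 1 + δ)]
        have e2 : R' (j + 1) = w (j - δ + 1) := by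
          rw [hR']; simp only; rw [if_neg (by omega : ¬ j + 1 < t + 1 + δ)]
          congr 1
          omega
        rw [e1, e2]
      rw [Finset.sum_congr rfl step, hB]
      have h := sum_shift (fun j => c (w (j - δ)) (w (j - δ + 1))) (t + 1) m₂ δ
      rw [Nat.add_right_comm t 1 δ] at h
      rw [← h]
      apply Finset.sum_congr rfl
      intro j hj
      have e : j + δ - δ = j := by omega
      rw [e]
  -- the Monge / equality exchange inequality
  have hcross : c (w t) (u (t + 1 + δ)) + c (u (t + δ)) (w (t + 1)) ≤
      c (w t) (w (t + 1)) + c (u (t + δ)) (u (t + 1 + δ)) := by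
    rcases eq_or_lt_of_le htle with heq | hlt
    · rw [heq]
    · apply hc (w t) (u (t + δ)) (u (t + 1 + δ)) (w (t + 1))
      · rw [← hw0]; exact path_mono hw 0 t (by omega) (by omega)
      · exact htgt
      · exact hu_lt (t + δ) (t + 1 + δ) (by omega) (by omega)
      · exact hlt
      · calc w (t + 1) ≤ w m₂ := path_mono hw (t + 1) m₂ htm le_rfl
          _ ≤ N := by rw [hwm]; exact h2N
  have e4 : t + δ + 1 = t + 1 + δ := by omega
  rw [e4] at lenu
  have hineq : pathLen c m₂ R + pathLen c (m₂ + δ) R' ≤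
      pathLen c (m₂ + δ) u + pathLen c m₂ w := by
    rw [lenR, lenR', lenu, lenw]
    linarith [hcross]
  have hule := humin m₂ R hRpath
  have hwle := hwmin (m₂ + δ) R' hR'path
  simp only [mul_zero, sub_zero] at hule hwle
  have eqR : pathLen c m₂ R = pathLen c (m₂ + δ) u := by linarith
  have eqR' : pathLen c (m₂ + δ) R' = pathLen c m₂ w := by linarith
  constructor
  · refine ⟨R, hRpath, ?_⟩
    intro m' v' hv'
    have h5 := humin m' v' hv'
    simp only [mul_zero, sub_zero] at h5 ⊢
    linarith
  · refine ⟨R', hR'path, ?_⟩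
    intro m' v' hv'
    have h5 := hwmin m' v' hv'
    simp only [mul_zero, sub_zero] at h5 ⊢
    linarith


/-- Both the least and the greatest link counts of shortest `s`-`n` paths are
nondecreasing in `n`, with value `0` at `n = s`. -/
theorem stmt6 (s N : ℕ) (c : ℕ → ℕ → ℝ) (hc : IsMonge s N c) (hsN : s ≤ N)
    (dmin dmax : ℕ → ℕ)
    (hmin : ∀ n, s ≤ n → n ≤ N → IsLeast (DSet s N n c 0) (dmin n))
    (hmax : ∀ n, s ≤ n → n ≤ N → IsGreatest (DSet s N n c 0) (dmax n)) :
    dmin s = 0 ∧ dmax s = 0 ∧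
    ∀ n₁ n₂, s ≤ n₁ → n₁ ≤ n₂ → n₂ ≤ N →
      dmin n₁ ≤ dmin n₂ ∧ dmax n₁ ≤ dmax n₂ := by
  refine ⟨?_, ?_, ?_⟩
  · obtain ⟨v, hv, -⟩ := (hmin s le_rfl hsN).1
    exact path_self_zero hv
  · obtain ⟨v, hv, -⟩ := (hmax s le_rfl hsN).1
    exact path_self_zero hv
  · intro n₁ n₂ h1 h12 h2N
    have h1N : n₁ ≤ N := le_trans h12 h2N
    have hs2 : s ≤ n₂ := le_trans h1 h12
    constructor
    · by_contra h
      push_neg at h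
      have hδ : 1 ≤ dmin n₁ - dmin n₂ := by omega
      have heq : dmin n₂ + (dmin n₁ - dmin n₂) = dmin n₁ := by omega
      have hk := key_exchange s N n₁ n₂ (dmin n₂) (dmin n₁ - dmin n₂) c hc h12 h2N hδ
        (by rw [heq]; exact (hmin n₁ h1 h1N).1) (hmin n₂ hs2 h2N).1
      have h6 := (hmin n₁ h1 h1N).2 hk.1
      omega
    · by_contra h
      push_neg at h
      have hδ : 1 ≤ dmax n₁ - dmax n₂ := by omega
      have heq : dmax n₂ + (dmax n₁ - dmax n₂) = dmax n₁ := by omega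
      have hk := key_exchange s N n₁ n₂ (dmax n₂) (dmax n₁ - dmax n₂) c hc h12 h2N hδ
        (by rw [heq]; exact (hmax n₁ h1 h1N).1) (hmax n₂ hs2 h2N).1
      have h6 := (hmax n₂ hs2 h2N).2 hk.2
      omega
end

section
/- Let G be a Monge DAG on {s,...,N} with edge lengths c, and let F(i) be the shortest-path distance from s to i. For n ∈ {s+1,...,N} let π_min(n) (resp. π_max(n)) be the least (resp. greatest) minimizer i ∈ [s, n-1] of F(i) + c(i,n). Then π_min and π_max are nondecreasing in n. -/
/-- The least and greatest minimizers of `F(i) + c(i,n)` are nondecreasing in `n`. -/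
theorem stmt7 (s N : ℕ) (c : ℕ → ℕ → ℝ) (hc : IsMonge s N c) (F : ℕ → ℝ)
    (hF : ∀ n, s ≤ n → n ≤ N → IsLeast (allLens s N n c) (F n))
    (pmin pmax : ℕ → ℕ)
    (hpmin : ∀ n, s + 1 ≤ n → n ≤ N →
      IsLeast {i | s ≤ i ∧ i < n ∧
        ∀ i', s ≤ i' → i' < n → F i + c i n ≤ F i' + c i' n} (pmin n))
    (hpmax : ∀ n, s + 1 ≤ n → n ≤ N →
      IsGreatest {i | s ≤ i ∧ i < n ∧
        ∀ i', s ≤ i' → i' < n → F i + c i n ≤ F i' + c i' n} (pmax n)) :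
    ∀ n₁ n₂, s + 1 ≤ n₁ → n₁ ≤ n₂ → n₂ ≤ N →
      pmin n₁ ≤ pmin n₂ ∧ pmax n₁ ≤ pmax n₂ := by
  intro n₁ n₂ h1 h12 h2
  rcases eq_or_lt_of_le h12 with rfl | hlt
  · exact ⟨le_refl _, le_refl _⟩
  have hs2 : s + 1 ≤ n₂ := le_trans h1 h12
  have h1N : n₁ ≤ N := le_trans h12 h2
  obtain ⟨⟨haS, haLt, haMin⟩, haLe⟩ := hpmin n₁ h1 h1N
  obtain ⟨⟨hbS, hbLt, hbMin⟩, _⟩ := hpmin n₂ hs2 h2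
  obtain ⟨⟨hcS, hcLt, hcMin⟩, _⟩ := hpmax n₁ h1 h1N
  obtain ⟨⟨hdS, hdLt, hdMin⟩, hdGe⟩ := hpmax n₂ hs2 h2
  constructor
  · by_contra hba
    push_neg at hba
    have hM := hc (pmin n₂) (pmin n₁) n₁ n₂ hbS hba haLt hlt h2
    have e1 : F (pmin n₁) + c (pmin n₁) n₁ ≤ F (pmin n₂) + c (pmin n₂) n₁ :=
      haMin _ hbS (lt_trans hba haLt)
    have strict : F (pmin n₁) + c (pmin n₁) n₁ < F (pmin n₂) + c (pmin n₂) n₁ := by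
      rcases lt_or_eq_of_le e1 with h | h
      · exact h
      · exfalso
        have hle : pmin n₁ ≤ pmin n₂ :=
          haLe ⟨hbS, lt_trans hba haLt, fun i' hi' hlt' => h ▸ haMin i' hi' hlt'⟩
        exact absurd hle (not_le.mpr hba)
    have e2 : F (pmin n₂) + c (pmin n₂) n₂ ≤ F (pmin n₁) + c (pmin n₁) n₂ :=
      hbMin _ haS (lt_trans haLt hlt)
    linarith
  · by_contra hba
    push_neg at hba
    have hM := hc (pmax n₂) (pmax n₁) n₁ n₂ hdS hba hcLt hlt h2
    have e1 : F (pmax n₁) + c (pmax n₁) n₁ ≤ F (pmax n₂) + c (pmax n₂) n₁ :=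
      hcMin _ hdS (lt_trans hba hcLt)
    have e2 : F (pmax n₂) + c (pmax n₂) n₂ ≤ F (pmax n₁) + c (pmax n₁) n₂ :=
      hdMin _ hcS (lt_trans hcLt hlt)
    have strict : F (pmax n₂) + c (pmax n₂) n₂ < F (pmax n₁) + c (pmax n₁) n₂ := by
      rcases lt_or_eq_of_le e2 with h | h
      · exact h
      · exfalso
        have hle : pmax n₁ ≤ pmax n₂ :=
          hdGe ⟨hcS, lt_trans hcLt hlt, fun i' hi' hlt' => h ▸ hdMin i' hi' hlt'⟩
        exact absurd hle (not_le.mpr hba)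
    linarith
end

section
/- Let G be a Monge DAG on {s,...,N}. In the minimal shortest-path tree T_min (where each node n > s selects as parent the least minimizer of F(i)+c(i,n)), the depth of every node n equals d_min(n), the least number of links among shortest s-n paths. Symmetrically, in the maximal shortest-path tree T_max (greatest minimizer as parent), the depth of n equals d_max(n). -/
section helpers

variable {s N : ℕ} {c : ℕ → ℕ → ℝ}

lemma path_le {a b m : ℕ} {v : ℕ → ℕ} (hv : IsPath s N a b m v) :
    ∀ {k l : ℕ}, k ≤ l → l ≤ m → v k ≤ v l := by
  intro k l
  induction l with
  | zero => intro hkl _; rw [Nat.le_zero.mp hkl]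
  | succ l ih =>
    intro hkl hlm
    rcases Nat.lt_or_ge k (l+1) with h | h
    · have h1 : v k ≤ v l := ih (by omega) (by omega)
      have h2 : v l < v (l+1) := hv.2.2.1 l (by omega)
      omega
    · rw [show k = l + 1 by omega]

lemma path_lt_s8 {a b m : ℕ} {v : ℕ → ℕ} (hv : IsPath s N a b m v)
    {k l : ℕ} (hkl : k < l) (hlm : l ≤ m) : v k < v l := by
  have h1 : v k ≤ v (l-1) := path_le hv (by omega) (by omega)
  have h2 := hv.2.2.1 (l-1) (by omega)
  rw [show l - 1 + 1 = l by omega] at h2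
  omega

lemma path_lb {a b m : ℕ} {v : ℕ → ℕ} (hv : IsPath s N a b m v)
    {k : ℕ} (hk : k ≤ m) : s ≤ v k := by
  have h1 := path_le hv (Nat.zero_le k) hk
  have h0 := hv.1
  have h2 := hv.2.2.2.1
  omega

lemma path_ub {a b m : ℕ} {v : ℕ → ℕ} (hv : IsPath s N a b m v)
    {k : ℕ} (hk : k ≤ m) : v k ≤ N := by
  have h1 := path_le hv hk le_rfl
  have h0 := hv.2.1
  have h2 := hv.2.2.2.2
  omega

/-- Extending a path to `i` by the edge `i → n`. -/
lemma extend_path {i n m : ℕ} {v : ℕ → ℕ} (hv : IsPath s N s i m v)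
    (hin : i < n) (hnN : n ≤ N) :
    IsPath s N s n (m+1) (fun k => if k ≤ m then v k else n) ∧
      pathLen c (m+1) (fun k => if k ≤ m then v k else n)
        = pathLen c m v + c i n := by
  constructor
  · refine ⟨?_, ?_, ?_, le_rfl, hnN⟩
    · show (if 0 ≤ m then v 0 else n) = s
      rw [if_pos (Nat.zero_le m), hv.1]
    · show (if m + 1 ≤ m then v (m+1) else n) = n
      rw [if_neg (by omega)]
    · intro k hk
      show (if k ≤ m then v k else n) < (if k + 1 ≤ m then v (k+1) else n)
      rcases Nat.lt_or_ge k m with h | h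
      · rw [if_pos (by omega : k ≤ m), if_pos (by omega : k + 1 ≤ m)]
        exact hv.2.2.1 k h
      · have hk' : k = m := by omega
        rw [if_pos (by omega : k ≤ m), if_neg (by omega : ¬ k + 1 ≤ m), hk', hv.2.1]
        exact hin
  · unfold pathLen
    rw [Finset.sum_range_succ]
    congr 1
    · apply Finset.sum_congr rfl
      intro k hk
      simp only [Finset.mem_range] at hk
      show c (if k ≤ m then v k else n) (if k + 1 ≤ m then v (k+1) else n)
          = c (v k) (v (k+1))
      rw [if_pos (by omega : k ≤ m), if_pos (by omega : k + 1 ≤ m)]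
    · show c (if m ≤ m then v m else n) (if m + 1 ≤ m then v (m+1) else n) = c i n
      rw [if_pos le_rfl, if_neg (by omega : ¬ m + 1 ≤ m), hv.2.1]

lemma F_lb (F : ℕ → ℝ)
    (hF : ∀ n, s ≤ n → n ≤ N → IsLeast (allLens s N n c) (F n))
    {n m : ℕ} {v : ℕ → ℕ} (hn : n ≤ N) (hv : IsPath s N s n m v) :
    F n ≤ pathLen c m v := by
  have hsn : s ≤ n := by
    have h1 := path_le hv (Nat.zero_le m) le_rfl
    have h2 := hv.1
    have h3 := hv.2.1
    omega
  exact (hF n hsn hn).2 ⟨m, v, hv, rfl⟩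

lemma F_le_step (F : ℕ → ℝ)
    (hF : ∀ n, s ≤ n → n ≤ N → IsLeast (allLens s N n c) (F n))
    {i n : ℕ} (hsi : s ≤ i) (hin : i < n) (hnN : n ≤ N) :
    F n ≤ F i + c i n := by
  obtain ⟨m, v, hv, hvl⟩ := (hF i hsi (by omega)).1
  obtain ⟨hv', hl'⟩ := extend_path (c := c) hv hin hnN
  calc F n ≤ pathLen c (m+1) _ := F_lb F hF hnN hv'
    _ = pathLen c m v + c i n := hl'
    _ = F i + c i n := by rw [hvl]

/-- membership in `DSet _ _ _ _ 0` is equivalent to having a path realizing `F n`. -/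
lemma mem_DSet_iff (F : ℕ → ℝ)
    (hF : ∀ n, s ≤ n → n ≤ N → IsLeast (allLens s N n c) (F n))
    {n : ℕ} (hsn : s ≤ n) (hnN : n ≤ N) (m : ℕ) :
    m ∈ DSet s N n c 0 ↔ ∃ v, IsPath s N s n m v ∧ pathLen c m v = F n := by
  constructor
  · rintro ⟨v, hv, hmin⟩
    refine ⟨v, hv, le_antisymm ?_ (F_lb F hF hnN hv)⟩
    obtain ⟨m', w, hw, hwl⟩ := (hF n hsn hnN).1
    have := hmin m' w hw
    simp only [mul_zero, sub_zero] at this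
    linarith
  · rintro ⟨v, hv, hvl⟩
    refine ⟨v, hv, ?_⟩
    intro m' w hw
    simp only [mul_zero, sub_zero]
    rw [hvl]
    exact F_lb F hF hnN hw

/-- Decomposition of a shortest path at its last edge. -/
lemma decomp (F : ℕ → ℝ)
    (hF : ∀ n, s ≤ n → n ≤ N → IsLeast (allLens s N n c) (F n))
    {n m : ℕ} {v : ℕ → ℕ} (hn1 : s + 1 ≤ n) (hnN : n ≤ N)
    (hv : IsPath s N s n m v) (hvl : pathLen c m v = F n) :
    1 ≤ m ∧ s ≤ v (m-1) ∧ v (m-1) < n ∧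
    IsPath s N s (v (m-1)) (m-1) v ∧ pathLen c (m-1) v = F (v (m-1)) ∧
    F (v (m-1)) + c (v (m-1)) n = F n ∧
    (∀ i', s ≤ i' → i' < n → F (v (m-1)) + c (v (m-1)) n ≤ F i' + c i' n) := by
  have hm : 1 ≤ m := by
    by_contra h
    have hm0 : m = 0 := by omega
    subst hm0
    have h1 := hv.1; have h2 := hv.2.1; omega
  have hin : v (m-1) < n := by
    have h := path_lt_s8 hv (show m - 1 < m by omega) le_rfl
    rw [hv.2.1] at h; exact h
  have hsi : s ≤ v (m-1) := path_lb hv (by omega)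
  have hpre : IsPath s N s (v (m-1)) (m-1) v :=
    ⟨hv.1, rfl, fun k hk => hv.2.2.1 k (by omega), le_rfl, by omega⟩
  have hsplit : pathLen c m v = pathLen c (m-1) v + c (v (m-1)) n := by
    have h : pathLen c (m-1+1) v
        = pathLen c (m-1) v + c (v (m-1)) (v (m-1+1)) :=
      Finset.sum_range_succ _ _
    rw [show m - 1 + 1 = m by omega] at h
    rw [h, hv.2.1]
  have h1 : F (v (m-1)) ≤ pathLen c (m-1) v := F_lb F hF (by omega) hpre
  have h2 : F n ≤ F (v (m-1)) + c (v (m-1)) n := F_le_step F hF hsi hin hnN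
  have hpl : pathLen c (m-1) v = F (v (m-1)) := by linarith [hvl, hsplit]
  have heq : F (v (m-1)) + c (v (m-1)) n = F n := by linarith [hvl, hsplit]
  refine ⟨hm, hsi, hin, hpre, hpl, heq, ?_⟩
  intro i' hsi' hi'n
  rw [heq]
  exact F_le_step F hF hsi' hi'n hnN

lemma flipAux {P : ℕ → Prop} {n : ℕ} (h0 : P 0) (hn : ¬ P n) :
    ∃ r, r < n ∧ P r ∧ ¬ P (r+1) := by
  by_contra h
  push_neg at h
  have key : ∀ k, k ≤ n → P k := by
    intro k
    induction k with
    | zero => exact fun _ => h0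
    | succ k ih => intro hk; exact h k (by omega) (ih (by omega))
  exact hn (key n le_rfl)

lemma sum_Ico_shift (f : ℕ → ℝ) (m n d : ℕ) :
    ∑ k ∈ Finset.Ico (m+d) (n+d), f k = ∑ k ∈ Finset.Ico m n, f (k+d) := by
  rw [Finset.sum_Ico_eq_sum_range, Finset.sum_Ico_eq_sum_range]
  rw [show n + d - (m + d) = n - m by omega]
  apply Finset.sum_congr rfl
  intro k _
  congr 1
  omega

/-- The crossing/exchange lemma for Monge lengths. -/
lemma exchange (hc : IsMonge s N c) (F : ℕ → ℝ)
    (hF : ∀ n, s ≤ n → n ≤ N → IsLeast (allLens s N n c) (F n))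
    {i j p q : ℕ} (hji : j ≤ i) (hiN : i ≤ N)
    {u w : ℕ → ℕ} (hu : IsPath s N s i p u) (hul : pathLen c p u = F i)
    (hw : IsPath s N s j q w) (hwl : pathLen c q w = F j)
    (hpq : p < q) :
    (∃ w', IsPath s N s j p w' ∧ pathLen c p w' = F j) ∧
    (∃ u', IsPath s N s i q u' ∧ pathLen c q u' = F i) := by
  have hjN : j ≤ N := le_trans hji hiN
  -- find the crossing point
  obtain ⟨r, hrp, hAr, hAr1⟩ :=
    flipAux (P := fun r => w (q - r) ≤ u (p - r)) (n := p)
      (by simpa [hu.2.1, hw.2.1] using hji)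
      (by
        push_neg
        have h1 : u (p - p) = s := by simp [hu.1]
        have h2 : s < w (q - p) := by
          have := path_lt_s8 hw (show 0 < q - p by omega) (by omega)
          rw [hw.1] at this; exact this
        omega)
  push_neg at hAr1
  set a := p - r - 1 with ha
  set b := q - r - 1 with hb
  set d := q - p with hd
  have hap : a + 1 ≤ p := by omega
  have hbq : b + 1 ≤ q := by omega
  have hbad : b = a + d := by omega
  have hab : u a < w b := by
    have : p - (r+1) = a := by omega
    have h2 : q - (r+1) = b := by omega
    rw [this, h2] at hAr1; exact hAr1
  have hba : w (b+1) ≤ u (a+1) := by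
    have h1 : p - r = a + 1 := by omega
    have h2 : q - r = b + 1 := by omega
    rw [h1, h2] at hAr; exact hAr
  -- the two swapped paths
  set S : ℕ → ℕ := fun k => if k ≤ a then u k else w (k + d) with hS
  set R : ℕ → ℕ := fun k => if k ≤ b then w k else u (k - d) with hR
  have hwb1 : w b < w (b+1) := path_lt_s8 hw (by omega) hbq
  have hSpath : IsPath s N s j p S := by
    refine ⟨by simp [hS, hu.1], ?_, ?_, le_rfl, hjN⟩
    · simp only [hS, if_neg (by omega : ¬ p ≤ a)]
      rw [show p + d = q by omega, hw.2.1]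
    · intro k hk
      rcases Nat.lt_or_ge k a with h | h
      · simp only [hS, if_pos (by omega : k ≤ a), if_pos (by omega : k+1 ≤ a)]
        exact path_lt_s8 hu (by omega) (by omega)
      rcases Nat.eq_or_lt_of_le h with h' | h'
      · simp only [hS, if_pos (le_of_eq h'.symm), if_neg (by omega : ¬ k+1 ≤ a)]
        rw [← h', show a + 1 + d = b + 1 by omega]
        omega
      · simp only [hS, if_neg (by omega : ¬ k ≤ a), if_neg (by omega : ¬ k+1 ≤ a)]
        exact path_lt_s8 hw (by omega) (by omega)
  have hRpath : IsPath s N s i q R := by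
    refine ⟨by simp [hR, hw.1], ?_, ?_, le_rfl, hiN⟩
    · simp only [hR, if_neg (by omega : ¬ q ≤ b)]
      rw [show q - d = p by omega, hu.2.1]
    · intro k hk
      rcases Nat.lt_or_ge k b with h | h
      · simp only [hR, if_pos (by omega : k ≤ b), if_pos (by omega : k+1 ≤ b)]
        exact path_lt_s8 hw (by omega) (by omega)
      rcases Nat.eq_or_lt_of_le h with h' | h'
      · simp only [hR, if_pos (le_of_eq h'.symm), if_neg (by omega : ¬ k+1 ≤ b)]
        rw [← h', show b + 1 - d = a + 1 by omega]
        omega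
      · simp only [hR, if_neg (by omega : ¬ k ≤ b), if_neg (by omega : ¬ k+1 ≤ b)]
        have h1 : k - d + 1 = k + 1 - d := by omega
        rw [← h1]
        exact path_lt_s8 hu (by omega) (by omega)
  -- the four sum pieces
  set Pu : ℝ := ∑ k ∈ Finset.range a, c (u k) (u (k+1)) with hPu
  set Su : ℝ := ∑ k ∈ Finset.Ico (a+1) p, c (u k) (u (k+1)) with hSu
  set Pw : ℝ := ∑ k ∈ Finset.range b, c (w k) (w (k+1)) with hPw
  set Sw : ℝ := ∑ k ∈ Finset.Ico (b+1) q, c (w k) (w (k+1)) with hSw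
  have split : ∀ (x : ℕ → ℕ) (e t : ℕ), e + 1 ≤ t →
      pathLen c t x = (∑ k ∈ Finset.range e, c (x k) (x (k+1))) + c (x e) (x (e+1))
        + ∑ k ∈ Finset.Ico (e+1) t, c (x k) (x (k+1)) := by
    intro x e t het
    unfold pathLen
    rw [Finset.range_eq_Ico, ← Finset.sum_Ico_consecutive _ (by omega : 0 ≤ e+1) het,
      ← Finset.range_eq_Ico, Finset.sum_range_succ]
  have hPlen : pathLen c p u = Pu + c (u a) (u (a+1)) + Su := split u a p hap
  have hQlen : pathLen c q w = Pw + c (w b) (w (b+1)) + Sw := split w b q hbq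
  have hSlen : pathLen c p S = Pu + c (u a) (w (b+1)) + Sw := by
    rw [split S a p hap]
    congr 1
    · congr 1
      · apply Finset.sum_congr rfl
        intro k hk
        simp only [Finset.mem_range] at hk
        simp only [hS, if_pos (by omega : k ≤ a), if_pos (by omega : k+1 ≤ a)]
      · simp only [hS, if_pos le_rfl, if_neg (by omega : ¬ a+1 ≤ a)]
        rw [show a + 1 + d = b + 1 by omega]
    · rw [hSw, show b + 1 = (a+1) + d by omega, show q = p + d by omega,
        sum_Ico_shift (fun k => c (w k) (w (k+1)))]
      apply Finset.sum_congr rfl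
      intro k hk
      simp only [Finset.mem_Ico] at hk
      simp only [hS, if_neg (by omega : ¬ k ≤ a), if_neg (by omega : ¬ k+1 ≤ a)]
      rw [show k + 1 + d = k + d + 1 by omega]
  have hRlen : pathLen c q R = Pw + c (w b) (u (a+1)) + Su := by
    rw [split R b q hbq]
    congr 1
    · congr 1
      · apply Finset.sum_congr rfl
        intro k hk
        simp only [Finset.mem_range] at hk
        simp only [hR, if_pos (by omega : k ≤ b), if_pos (by omega : k+1 ≤ b)]
      · simp only [hR, if_pos le_rfl, if_neg (by omega : ¬ b+1 ≤ b)]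
        rw [show b + 1 - d = a + 1 by omega]
    · rw [hSu]
      rw [show b + 1 = (a+1) + d by omega, show q = p + d by omega,
        sum_Ico_shift (fun k => c (R k) (R (k+1)))]
      apply Finset.sum_congr rfl
      intro k hk
      simp only [Finset.mem_Ico] at hk
      simp only [hR, if_neg (by omega : ¬ k + d ≤ b), if_neg (by omega : ¬ k+d+1 ≤ b)]
      rw [show k + d - d = k by omega, show k + d + 1 - d = k + 1 by omega]
  -- Monge inequality at the crossing
  have hmonge : c (u a) (w (b+1)) + c (w b) (u (a+1))
      ≤ c (u a) (u (a+1)) + c (w b) (w (b+1)) := by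
    rcases Nat.eq_or_lt_of_le hba with h | h
    · rw [h]
    · have hsa : s ≤ u a := path_lb hu (by omega)
      have hN1 : u (a+1) ≤ N := le_trans (path_ub hu hap) le_rfl
      linarith [hc (u a) (w b) (w (b+1)) (u (a+1)) hsa hab hwb1 h hN1]
  have hSlb : F j ≤ pathLen c p S := F_lb F hF hjN hSpath
  have hRlb : F i ≤ pathLen c q R := F_lb F hF hiN hRpath
  have hSeq : pathLen c p S = F j := by
    rw [hSlen] at hSlb ⊢
    rw [hPlen] at hul
    rw [hQlen] at hwl
    rw [hRlen] at hRlb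
    linarith
  have hReq : pathLen c q R = F i := by
    rw [hSlen] at hSlb
    rw [hPlen] at hul
    rw [hQlen] at hwl
    rw [hRlen] at hRlb ⊢
    linarith
  exact ⟨⟨S, hSpath, hSeq⟩, ⟨R, hRpath, hReq⟩⟩

end helpers

/-- In the minimal (resp. maximal) shortest-path tree, the depth of each node `n`
equals the least (resp. greatest) number of links among shortest `s`-`n` paths. -/
theorem stmt8 (s N : ℕ) (c : ℕ → ℕ → ℝ) (hc : IsMonge s N c) (F : ℕ → ℝ)
    (hF : ∀ n, s ≤ n → n ≤ N → IsLeast (allLens s N n c) (F n))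
    (pmin pmax depmin depmax dmin dmax : ℕ → ℕ)
    (hpmin : ∀ n, s + 1 ≤ n → n ≤ N →
      IsLeast {i | s ≤ i ∧ i < n ∧
        ∀ i', s ≤ i' → i' < n → F i + c i n ≤ F i' + c i' n} (pmin n))
    (hpmax : ∀ n, s + 1 ≤ n → n ≤ N →
      IsGreatest {i | s ≤ i ∧ i < n ∧
        ∀ i', s ≤ i' → i' < n → F i + c i n ≤ F i' + c i' n} (pmax n))
    (hdepmin0 : depmin s = 0)
    (hdepmin : ∀ n, s + 1 ≤ n → n ≤ N → depmin n = depmin (pmin n) + 1)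
    (hdepmax0 : depmax s = 0)
    (hdepmax : ∀ n, s + 1 ≤ n → n ≤ N → depmax n = depmax (pmax n) + 1)
    (hdmin : ∀ n, s ≤ n → n ≤ N → IsLeast (DSet s N n c 0) (dmin n))
    (hdmax : ∀ n, s ≤ n → n ≤ N → IsGreatest (DSet s N n c 0) (dmax n)) :
    ∀ n, s ≤ n → n ≤ N → depmin n = dmin n ∧ depmax n = dmax n := by
  intro n
  induction n using Nat.strong_induction_on with
  | _ n ih =>
  intro hsn hnN
  rcases Nat.eq_or_lt_of_le hsn with rfl | hlt
  · -- base case n = s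
    have honly : ∀ m ∈ DSet s N s c 0, m = 0 := by
      rintro m ⟨v, hv, -⟩
      by_contra h
      have := path_lt_s8 hv (show 0 < m by omega) le_rfl
      rw [hv.1, hv.2.1] at this
      omega
    have h1 : dmin s = 0 := honly _ (hdmin s le_rfl hnN).1
    have h2 : dmax s = 0 := honly _ (hdmax s le_rfl hnN).1
    exact ⟨by rw [hdepmin0, h1], by rw [hdepmax0, h2]⟩
  · have hn1 : s + 1 ≤ n := hlt
    -- min part
    obtain ⟨⟨hsp, hpn, hpm⟩, hplb⟩ := hpmin n hn1 hnN
    obtain ⟨⟨hsP, hPn, hPm⟩, hPub⟩ := hpmax n hn1 hnN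
    have ihmin := ih (pmin n) hpn hsp (by omega)
    have ihmax := ih (pmax n) hPn hsP (by omega)
    -- F n = F (pmin n) + c (pmin n) n  and = F (pmax n) + c (pmax n) n
    have hFp : ∀ {x : ℕ}, s ≤ x → x < n →
        (∀ i', s ≤ i' → i' < n → F x + c x n ≤ F i' + c i' n) →
        F x + c x n = F n := by
      intro x hsx hxn hxm
      obtain ⟨m, v, hv, hvl⟩ := (hF n hsn hnN).1
      obtain ⟨hm, hsi, hin, hpre, hpl, heq, hmin'⟩ := decomp F hF hn1 hnN hv hvl
      have h1 := hxm (v (m-1)) hsi hin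
      have h2 := hmin' x hsx hxn
      linarith
    have hFpmin : F (pmin n) + c (pmin n) n = F n := hFp hsp hpn hpm
    have hFpmax : F (pmax n) + c (pmax n) n = F n := hFp hsP hPn hPm
    -- extension: if m ∈ DSet x and x a minimizer, then m+1 ∈ DSet n
    have hext : ∀ {x m : ℕ}, s ≤ x → x < n → F x + c x n = F n →
        m ∈ DSet s N x c 0 → (m+1) ∈ DSet s N n c 0 := by
      intro x m hsx hxn hFx hm
      rw [mem_DSet_iff F hF hsx (by omega)] at hm
      obtain ⟨v, hv, hvl⟩ := hm
      obtain ⟨hv', hl'⟩ := extend_path (c := c) hv hxn hnN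
      rw [mem_DSet_iff F hF hsn hnN]
      exact ⟨_, hv', by rw [hl', hvl, hFx]⟩
    constructor
    · -- depmin n = dmin n
      have hub : dmin n ≤ dmin (pmin n) + 1 :=
        (hdmin n hsn hnN).2 (hext hsp hpn hFpmin (hdmin (pmin n) hsp (by omega)).1)
      have hlb : dmin (pmin n) + 1 ≤ dmin n := by
        have hmem := (hdmin n hsn hnN).1
        rw [mem_DSet_iff F hF hsn hnN] at hmem
        obtain ⟨v, hv, hvl⟩ := hmem
        obtain ⟨hm, hsi, hin, hpre, hpl, heq, hmin'⟩ := decomp F hF hn1 hnN hv hvl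
        set i := v (dmin n - 1)
        have hji : pmin n ≤ i := hplb ⟨hsi, hin, hmin'⟩
        have hiDSet : (dmin n - 1) ∈ DSet s N i c 0 := by
          rw [mem_DSet_iff F hF hsi (by omega)]
          exact ⟨v, hpre, hpl⟩
        -- want: dmin (pmin n) ≤ dmin n - 1
        have key : dmin (pmin n) ≤ dmin n - 1 := by
          by_contra h
          push_neg at h
          -- exchange: p = dmin n - 1 ∈ DSet i, q = dmin (pmin n) ∈ DSet (pmin n), p < q
          have hq := (hdmin (pmin n) hsp (by omega)).1
          rw [mem_DSet_iff F hF hsp (by omega)] at hq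
          rw [mem_DSet_iff F hF hsi (by omega)] at hiDSet
          obtain ⟨u, hu, hul⟩ := hiDSet
          obtain ⟨w, hw, hwl⟩ := hq
          obtain ⟨⟨w', hw', hwl'⟩, -⟩ :=
            exchange hc F hF hji (by omega) hu hul hw hwl h
          have : (dmin n - 1) ∈ DSet s N (pmin n) c 0 := by
            rw [mem_DSet_iff F hF hsp (by omega)]
            exact ⟨w', hw', hwl'⟩
          have := (hdmin (pmin n) hsp (by omega)).2 this
          omega
        omega
      rw [hdepmin n hn1 hnN, ihmin.1]
      omega
    · -- depmax n = dmax n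
      have hlb : dmax (pmax n) + 1 ≤ dmax n :=
        (hdmax n hsn hnN).2 (hext hsP hPn hFpmax (hdmax (pmax n) hsP (by omega)).1)
      have hub : dmax n ≤ dmax (pmax n) + 1 := by
        have hmem := (hdmax n hsn hnN).1
        rw [mem_DSet_iff F hF hsn hnN] at hmem
        obtain ⟨v, hv, hvl⟩ := hmem
        obtain ⟨hm, hsi, hin, hpre, hpl, heq, hmin'⟩ := decomp F hF hn1 hnN hv hvl
        set i := v (dmax n - 1)
        have hji : i ≤ pmax n := hPub ⟨hsi, hin, hmin'⟩
        have hiDSet : (dmax n - 1) ∈ DSet s N i c 0 := by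
          rw [mem_DSet_iff F hF hsi (by omega)]
          exact ⟨v, hpre, hpl⟩
        have key : dmax n - 1 ≤ dmax (pmax n) := by
          by_contra h
          push_neg at h
          have hq := (hdmax (pmax n) hsP (by omega)).1
          rw [mem_DSet_iff F hF hsP (by omega)] at hq
          rw [mem_DSet_iff F hF hsi (by omega)] at hiDSet
          obtain ⟨w, hw, hwl⟩ := hiDSet
          obtain ⟨u, hu, hul⟩ := hq
          obtain ⟨-, ⟨u', hu', hul'⟩⟩ :=
            exchange hc F hF hji (by omega) hu hul hw hwl h
          have : (dmax n - 1) ∈ DSet s N (pmax n) c 0 := by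
            rw [mem_DSet_iff F hF hsP (by omega)]
            exact ⟨u', hu', hul'⟩
          have := (hdmax (pmax n) hsP (by omega)).2 this
          omega
        omega
      rw [hdepmax n hn1 hnN, ihmax.2]
      omega
end

section
/- Let G be a Monge DAG on {s,...,N}. All nodes at the same depth in the minimal shortest-path tree T_min form a consecutive interval of integers; likewise for the maximal shortest-path tree T_max. -/
/-- Nodes of equal depth in the minimal (resp. maximal) shortest-path tree form a
consecutive interval of integers. -/
theorem stmt9 (s N : ℕ) (c : ℕ → ℕ → ℝ) (hc : IsMonge s N c) (F : ℕ → ℝ)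
    (hF : ∀ n, s ≤ n → n ≤ N → IsLeast (allLens s N n c) (F n))
    (pmin pmax depmin depmax : ℕ → ℕ)
    (hpmin : ∀ n, s + 1 ≤ n → n ≤ N →
      IsLeast {i | s ≤ i ∧ i < n ∧
        ∀ i', s ≤ i' → i' < n → F i + c i n ≤ F i' + c i' n} (pmin n))
    (hpmax : ∀ n, s + 1 ≤ n → n ≤ N →
      IsGreatest {i | s ≤ i ∧ i < n ∧
        ∀ i', s ≤ i' → i' < n → F i + c i n ≤ F i' + c i' n} (pmax n))
    (hdepmin0 : depmin s = 0)
    (hdepmin : ∀ n, s + 1 ≤ n → n ≤ N → depmin n = depmin (pmin n) + 1)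
    (hdepmax0 : depmax s = 0)
    (hdepmax : ∀ n, s + 1 ≤ n → n ≤ N → depmax n = depmax (pmax n) + 1) :
    ∀ n₁ n₂ n₃, s ≤ n₁ → n₁ ≤ n₂ → n₂ ≤ n₃ → n₃ ≤ N →
      (depmin n₁ = depmin n₃ → depmin n₂ = depmin n₁) ∧
      (depmax n₁ = depmax n₃ → depmax n₂ = depmax n₁) := by
  -- Key exchange lemma: if i₂ is optimal at a, i₁ is optimal at b, i₁ < i₂ < a < b,
  -- then both are optimal at both.
  have key : ∀ i₁ i₂ a b : ℕ, s ≤ i₁ → i₁ < i₂ → i₂ < a → a < b → b ≤ N →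
      (∀ i', s ≤ i' → i' < a → F i₂ + c i₂ a ≤ F i' + c i' a) →
      (∀ i', s ≤ i' → i' < b → F i₁ + c i₁ b ≤ F i' + c i' b) →
      F i₁ + c i₁ a = F i₂ + c i₂ a ∧ F i₁ + c i₁ b = F i₂ + c i₂ b := by
    intro i₁ i₂ a b h1 h2 h3 h4 h5 hoa hob
    have hm := hc i₁ i₂ a b h1 h2 h3 h4 h5
    have hA := hoa i₁ h1 (h2.trans h3)
    have hB := hob i₂ (h1.trans h2.le) (h3.trans h4)
    constructor <;> linarith
  -- pmin is monotone
  have pmin_mono : ∀ a b, s + 1 ≤ a → a ≤ b → b ≤ N → pmin a ≤ pmin b := by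
    intro a b ha hab hb
    rcases eq_or_lt_of_le hab with rfl | hab
    · exact le_rfl
    by_contra h
    push_neg at h
    obtain ⟨⟨hbs, hblt, hbopt⟩, _⟩ := hpmin b ((le_trans ha hab.le)) hb
    obtain ⟨⟨has, halt, haopt⟩, hleast⟩ := hpmin a ha (le_trans hab.le hb)
    obtain ⟨heqa, _⟩ := key (pmin b) (pmin a) a b hbs h halt hab hb haopt hbopt
    have : pmin a ≤ pmin b := by
      apply hleast
      exact ⟨hbs, h.trans halt, fun i' hi1 hi2 => heqa ▸ haopt i' hi1 hi2⟩
    omega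
  -- pmax is monotone
  have pmax_mono : ∀ a b, s + 1 ≤ a → a ≤ b → b ≤ N → pmax a ≤ pmax b := by
    intro a b ha hab hb
    rcases eq_or_lt_of_le hab with rfl | hab
    · exact le_rfl
    by_contra h
    push_neg at h
    obtain ⟨⟨hbs, hblt, hbopt⟩, hgreat⟩ := hpmax b ((le_trans ha hab.le)) hb
    obtain ⟨⟨has, halt, haopt⟩, _⟩ := hpmax a ha (le_trans hab.le hb)
    obtain ⟨_, heqb⟩ := key (pmax b) (pmax a) a b hbs h halt hab hb haopt hbopt
    have : pmax a ≤ pmax b := by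
      apply hgreat
      exact ⟨has, halt.trans hab, fun i' hi1 hi2 => heqb ▸ hbopt i' hi1 hi2⟩
    omega
  -- depth monotone, generic
  have dep_mono : ∀ (p dep : ℕ → ℕ),
      (∀ n, s + 1 ≤ n → n ≤ N → s ≤ p n ∧ p n < n) →
      (∀ a b, s + 1 ≤ a → a ≤ b → b ≤ N → p a ≤ p b) →
      dep s = 0 →
      (∀ n, s + 1 ≤ n → n ≤ N → dep n = dep (p n) + 1) →
      ∀ b a, s ≤ a → a ≤ b → b ≤ N → dep a ≤ dep b := by
    intro p dep hpmem hpm hd0 hdrec b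
    induction b using Nat.strong_induction_on with
    | _ b ih =>
      intro a hsa hab hb
      rcases eq_or_lt_of_le hab with rfl | hab
      · exact le_rfl
      have hsb : s + 1 ≤ b := by omega
      obtain ⟨hpbs, hpblt⟩ := hpmem b hsb hb
      rcases eq_or_lt_of_le hsa with rfl | hsa'
      · rw [hd0]; omega
      have hsa1 : s + 1 ≤ a := by omega
      obtain ⟨hpas, hpalt⟩ := hpmem a hsa1 (by omega)
      have hple := hpm a b hsa1 hab.le hb
      have := ih (p b) hpblt (p a) hpas hple (by omega)
      rw [hdrec a hsa1 (by omega), hdrec b hsb hb]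
      omega
  have hminmem : ∀ n, s + 1 ≤ n → n ≤ N → s ≤ pmin n ∧ pmin n < n := by
    intro n h1 h2
    obtain ⟨⟨ha, hb, _⟩, _⟩ := hpmin n h1 h2
    exact ⟨ha, hb⟩
  have hmaxmem : ∀ n, s + 1 ≤ n → n ≤ N → s ≤ pmax n ∧ pmax n < n := by
    intro n h1 h2
    obtain ⟨⟨ha, hb, _⟩, _⟩ := hpmax n h1 h2
    exact ⟨ha, hb⟩
  have dmin := dep_mono pmin depmin hminmem pmin_mono hdepmin0 hdepmin
  have dmax := dep_mono pmax depmax hmaxmem pmax_mono hdepmax0 hdepmax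
  intro n₁ n₂ n₃ h1 h12 h23 h3
  constructor
  · intro h
    have a1 := dmin n₂ n₁ h1 h12 (by omega)
    have a2 := dmin n₃ n₂ (by omega) h23 h3
    omega
  · intro h
    have a1 := dmax n₂ n₁ h1 h12 (by omega)
    have a2 := dmax n₃ n₂ (by omega) h23 h3
    omega
end

section
/- Let G be a Monge DAG on {s,...,N}, 1 ≤ m ≤ M ≤ N-s-1, and let (v_0,...,v_{M+1}) be a shortest (M+1)-link s-N path. Then s+m+1 ≤ v_{m+1} ≤ N-M+m and δ(m, v_{m+1}) ≤ δ(M, N), where δ(k,j) = f(k+1,j) - f(k,j). -/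
/-- Along a strictly increasing sequence, values grow at least linearly. -/
lemma path_mono_s14 (n : ℕ) (v : ℕ → ℕ) (h : ∀ k < n, v k < v (k + 1)) :
    ∀ b ≤ n, ∀ a ≤ b, v a + (b - a) ≤ v b := by
  intro b
  induction b with
  | zero =>
      intro _ a ha
      have : a = 0 := Nat.le_zero.mp ha
      subst this; simp
  | succ b ih =>
      intro hbn a hab
      rcases Nat.lt_or_ge a (b + 1) with hlt | hge
      · have h1 := ih (by omega) a (by omega)
        have h2 := h b (by omega)
        omega
      · have : a = b + 1 := by omega
        subst this; simp

/-- For a shortest `(M+1)`-link `s`-`N` path `v` and `1 ≤ m ≤ M ≤ N-s-1`: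
`s+m+1 ≤ v(m+1) ≤ N-M+m` and `δ(m, v(m+1)) ≤ δ(M, N)`. -/
theorem stmt14 (s N m M : ℕ) (c : ℕ → ℕ → ℝ) (hc : IsMonge s N c)
    (hm : 1 ≤ m) (hmM : m ≤ M) (hM : M + s + 1 ≤ N)
    (f : ℕ → ℕ → ℝ)
    (hf : ∀ k j, 1 ≤ k → s + k ≤ j → j ≤ N → IsLeast (pathLens s N s j k c) (f k j))
    (v : ℕ → ℕ) (hv : IsPath s N s N (M + 1) v)
    (hopt : ∀ w, IsPath s N s N (M + 1) w →
      pathLen c (M + 1) v ≤ pathLen c (M + 1) w) :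
    s + m + 1 ≤ v (m + 1) ∧ v (m + 1) + M ≤ N + m ∧
    f (m + 1) (v (m + 1)) - f m (v (m + 1)) ≤ f (M + 1) N - f M N := by
  obtain ⟨hv0, hvN, hvinc, hss, _⟩ := hv
  have mono := path_mono_s14 (M + 1) v hvinc
  have h1 : s + m + 1 ≤ v (m + 1) := by
    have := mono (m + 1) (by omega) 0 (by omega)
    omega
  have h2 : v (m + 1) + M ≤ N + m := by
    have := mono (M + 1) le_rfl (m + 1) (by omega)
    omega
  have hjN : v (m + 1) ≤ N := by omega
  refine ⟨h1, h2, ?_⟩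
  -- f values
  have hfm1j := hf (m + 1) (v (m + 1)) (by omega) (by omega) hjN
  have hfmj := hf m (v (m + 1)) hm (by omega) hjN
  have hfM1 := hf (M + 1) N (by omega) (by omega) le_rfl
  have hfM := hf M N (by omega) (by omega) le_rfl
  -- suffix length
  obtain ⟨d, hd⟩ : ∃ d, M = m + d := ⟨M - m, by omega⟩
  set S : ℝ := ∑ k ∈ Finset.range d, c (v (m + 1 + k)) (v (m + 1 + k + 1)) with hS
  have hsplit : pathLen c (M + 1) v = pathLen c (m + 1) v + S := by
    unfold pathLen
    rw [show M + 1 = (m + 1) + d from by omega, Finset.sum_range_add]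
  -- f (M+1) N equals the length of v
  have hvpath : IsPath s N s N (M + 1) v := ⟨hv0, hvN, hvinc, hss, le_rfl⟩
  have hEq : f (M + 1) N = pathLen c (M + 1) v := by
    obtain ⟨⟨u, hu, hul⟩, hlb⟩ := hfM1
    have h3 := hopt u hu
    have h4 := hlb ⟨v, hvpath, rfl⟩
    linarith
  -- prefix of v is an (m+1)-link path to v (m+1)
  have hpre : f (m + 1) (v (m + 1)) ≤ pathLen c (m + 1) v :=
    hfm1j.2 ⟨v, ⟨hv0, rfl, fun k hk => hvinc k (by omega), hss, hjN⟩, rfl⟩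
  -- a shortest m-link path to v (m+1), concatenated with the suffix of v
  obtain ⟨⟨p, hp, hpl⟩, _⟩ := hfmj
  obtain ⟨hp0, hpm, hpinc, _, _⟩ := hp
  set w : ℕ → ℕ := fun k => if k ≤ m then p k else v (k + 1) with hw
  have hwm : ∀ k, w (m + k) = v (m + 1 + k) := by
    intro k
    rcases Nat.eq_zero_or_pos k with rfl | hk0
    · simp [hw, hpm]
    · have hnle : ¬ m + k ≤ m := by omega
      simp only [hw, hnle, if_false]
      congr 1
      omega
  have hwpath : IsPath s N s N M w := by
    refine ⟨by simp [hw, hp0], ?_, ?_, hss, le_rfl⟩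
    · have := hwm d
      rw [show m + d = M from hd.symm, show m + 1 + d = M + 1 from by omega] at this
      rw [this, hvN]
    · intro k hk
      rcases Nat.lt_or_ge k m with hkm | hkm
      · have hk1 : k + 1 ≤ m := hkm
        simp only [hw, Nat.le_of_lt hkm, hk1, if_true]
        exact hpinc k hkm
      · obtain ⟨e, he⟩ : ∃ e, k = m + e := ⟨k - m, by omega⟩
        subst he
        have e1 := hwm e
        have e2 := hwm (e + 1)
        rw [show m + (e + 1) = m + e + 1 from by omega] at e2
        rw [e1, e2, show m + 1 + (e + 1) = m + 1 + e + 1 from by omega]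
        exact hvinc (m + 1 + e) (by omega)
  have hwlen : pathLen c M w = pathLen c m p + S := by
    unfold pathLen
    rw [hd, Finset.sum_range_add]
    congr 1
    · refine Finset.sum_congr rfl fun k hk => ?_
      simp only [Finset.mem_range] at hk
      have hk1 : k + 1 ≤ m := hk
      simp [hw, Nat.le_of_lt hk, hk1]
    · refine Finset.sum_congr rfl fun k hk => ?_
      rw [show m + k + 1 = m + (k + 1) from rfl, hwm k, hwm (k + 1),
        show m + 1 + (k + 1) = m + 1 + k + 1 from by omega]
  have hfMle : f M N ≤ f m (v (m + 1)) + S := by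
    have := hfM.2 ⟨w, hwpath, rfl⟩
    rw [hwlen, hpl] at this
    exact this
  linarith
end

section
/- Let G be a Monge DAG on {s,...,N}, λ ∈ ℝ, and n ∈ {s+1,...,N}. Suppose P is a shortest s-n path in G(λ) with the least number of links d_min(λ,n), and Q is a shortest s-n path in G(λ) with the greatest number of links d_max(λ,n). Then for every m with d_min(λ,n) ≤ m ≤ d_max(λ,n), the swapped path Q⊕_m P is a shortest s-n path in G(λ) with exactly m links, and it is simultaneously a shortest m-link s-n path in G. -/
/-- Swapping a shallowest and a deepest shortest `s`-`n` path in `G(lam)` yields,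
for any intermediate link count `m`, a shortest `s`-`n` path in `G(lam)` with
exactly `m` links, which is simultaneously a shortest `m`-link `s`-`n` path in `G`. -/
theorem stmt19 (s N n m₁ m₂ m k : ℕ) (c : ℕ → ℕ → ℝ) (hc : IsMonge s N c)
    (lam : ℝ) (hn1 : s + 1 ≤ n) (hn2 : n ≤ N)
    (u v : ℕ → ℕ)
    (hu : IsPath s N s n m₁ u) (hv : IsPath s N s n m₂ v)
    (huopt : ∀ m' w, IsPath s N s n m' w →
      pathLen c m₁ u - m₁ * lam ≤ pathLen c m' w - m' * lam)
    (hvopt : ∀ m' w, IsPath s N s n m' w →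
      pathLen c m₂ v - m₂ * lam ≤ pathLen c m' w - m' * lam)
    (hdmin : IsLeast (DSet s N n c lam) m₁)
    (hdmax : IsGreatest (DSet s N n c lam) m₂)
    (hm : m₁ ≤ m) (hm' : m ≤ m₂)
    (hk : IsLeast {k | 1 ≤ k ∧ k ≤ m₁ ∧ v (m - m₁ + k) ≤ u k} k) :
    IsPath s N s n m (fun i => if i < m - m₁ + k then v i else u (i - (m - m₁))) ∧
    (∀ m' w, IsPath s N s n m' w →
      pathLen c m (fun i => if i < m - m₁ + k then v i else u (i - (m - m₁))) - m * lam ≤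
        pathLen c m' w - m' * lam) ∧
    (∀ w, IsPath s N s n m w →
      pathLen c m (fun i => if i < m - m₁ + k then v i else u (i - (m - m₁))) ≤
        pathLen c m w) := by
  obtain ⟨hu0, hum, huinc, -, -⟩ := hu
  obtain ⟨hv0, hvm, hvinc, -, -⟩ := hv
  obtain ⟨⟨hk1, hkm1, hkle⟩, hkmin⟩ := hk
  have hm1 : 1 ≤ m₁ := by
    by_contra h
    have h0 : m₁ = 0 := by omega
    rw [h0] at hum
    omega
  set a := m - m₁ with ha
  have hak2 : a + k ≤ m₂ := by omega
  have humono : ∀ i j, i ≤ j → j ≤ m₁ → u i ≤ u j := by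
    intro i j hij hjm
    induction j with
    | zero =>
      have h0 : i = 0 := by omega
      rw [h0]
    | succ jj ih =>
      rcases Nat.lt_or_ge i (jj+1) with h | h
      · exact le_trans (ih (by omega) (by omega)) (le_of_lt (huinc jj (by omega)))
      · have h0 : i = jj + 1 := by omega
        rw [h0]
  have hvmono : ∀ i j, i ≤ j → j ≤ m₂ → v i ≤ v j := by
    intro i j hij hjm
    induction j with
    | zero =>
      have h0 : i = 0 := by omega
      rw [h0]
    | succ jj ih =>
      rcases Nat.lt_or_ge i (jj+1) with h | h
      · exact le_trans (ih (by omega) (by omega)) (le_of_lt (hvinc jj (by omega)))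
      · have h0 : i = jj + 1 := by omega
        rw [h0]
  have hvstrict : ∀ i j, i < j → j ≤ m₂ → v i < v j := by
    intro i j hij hjm
    exact lt_of_lt_of_le (hvinc i (by omega)) (hvmono (i+1) j (by omega) hjm)
  set M' := m₁ + m₂ - m with hM'
  set R : ℕ → ℕ := fun i => if i < a + k then v i else u (i - a) with hR
  set R' : ℕ → ℕ := fun i => if i < k then u i else v (i + a) with hR'
  have hRpath : IsPath s N s n m R := by
    refine ⟨?_, ?_, ?_, le_refl s, hn2⟩
    · simp only [hR]
      rw [if_pos (by omega), hv0]
    · simp only [hR]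
      rw [if_neg (by omega), show m - a = m₁ from by omega, hum]
    · intro j hj
      simp only [hR]
      by_cases h1 : j + 1 < a + k
      · rw [if_pos (by omega), if_pos h1]
        exact hvinc j (by omega)
      · rw [if_neg h1]
        by_cases h2 : j < a + k
        · rw [if_pos h2, show j + 1 - a = k from by omega]
          calc v j < v (a + k) := hvstrict j (a+k) (by omega) hak2
            _ ≤ u k := hkle
        · rw [if_neg h2, show j + 1 - a = (j - a) + 1 from by omega]
          exact huinc (j - a) (by omega)
  have hR'path : IsPath s N s n M' R' := by
    refine ⟨?_, ?_, ?_, le_refl s, hn2⟩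
    · simp only [hR']
      rw [if_pos (by omega), hu0]
    · simp only [hR']
      rw [if_neg (by omega), show M' + a = m₂ from by omega, hvm]
    · intro j hj
      simp only [hR']
      by_cases h1 : j + 1 < k
      · rw [if_pos (by omega), if_pos h1]
        exact huinc j (by omega)
      · rw [if_neg h1]
        by_cases h2 : j < k
        · rw [if_pos h2]
          have hjk : j = k - 1 := by omega
          by_cases hk2 : k = 1
          · rw [show j = 0 from by omega, hu0, ← hv0]
            exact hvstrict 0 (0 + 1 + a) (by omega) (by omega)
          · have hu1 : u (k-1) < v (a + (k-1)) := by
              by_contra hcon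
              push_neg at hcon
              have hmem : k ≤ k - 1 := hkmin ⟨by omega, by omega, hcon⟩
              omega
            rw [hjk]
            calc u (k-1) < v (a + (k-1)) := hu1
              _ ≤ v (k - 1 + 1 + a) := hvmono _ _ (by omega) (by omega)
        · rw [if_neg h2, show j + 1 + a = (j + a) + 1 from by omega]
          exact hvinc (j + a) (by omega)
  set A := a + k - 1 with hA
  set B := m₂ - (a + k) with hB
  set C := m₁ - k with hC
  have hSR : pathLen c m R = (∑ j ∈ Finset.range A, c (v j) (v (j+1))) + c (v A) (u k)
      + ∑ i ∈ Finset.range C, c (u (k+i)) (u (k+i+1)) := by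
    unfold pathLen
    rw [show m = A + 1 + C from by omega, Finset.sum_range_add, Finset.sum_range_succ]
    congr 1
    · congr 1
      · refine Finset.sum_congr rfl (fun j hj => ?_)
        simp only [Finset.mem_range] at hj
        simp only [hR]
        rw [if_pos (by omega), if_pos (by omega)]
      · simp only [hR]
        rw [if_pos (by omega), if_neg (by omega), show A + 1 - a = k from by omega]
    · refine Finset.sum_congr rfl (fun i hi => ?_)
      simp only [hR]
      rw [if_neg (by omega), if_neg (by omega), show A + 1 + i - a = k + i from by omega,
        show A + 1 + i + 1 - a = k + i + 1 from by omega]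
  have hSu : pathLen c m₁ u = (∑ j ∈ Finset.range (k-1), c (u j) (u (j+1))) + c (u (k-1)) (u k)
      + ∑ i ∈ Finset.range C, c (u (k+i)) (u (k+i+1)) := by
    unfold pathLen
    rw [show m₁ = (k-1) + 1 + C from by omega, Finset.sum_range_add, Finset.sum_range_succ]
    simp only [show k - 1 + 1 = k from by omega]
  have hSv : pathLen c m₂ v = (∑ j ∈ Finset.range A, c (v j) (v (j+1))) + c (v A) (v (A+1))
      + ∑ i ∈ Finset.range B, c (v (A+1+i)) (v (A+1+i+1)) := by
    unfold pathLen
    rw [show m₂ = A + 1 + B from by omega, Finset.sum_range_add, Finset.sum_range_succ]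
  have hSR' : pathLen c M' R' = (∑ j ∈ Finset.range (k-1), c (u j) (u (j+1)))
      + c (u (k-1)) (v (A+1)) + ∑ i ∈ Finset.range B, c (v (A+1+i)) (v (A+1+i+1)) := by
    unfold pathLen
    rw [show M' = (k-1) + 1 + B from by omega, Finset.sum_range_add, Finset.sum_range_succ]
    simp only [show k - 1 + 1 = k from by omega]
    congr 1
    · congr 1
      · refine Finset.sum_congr rfl (fun j hj => ?_)
        simp only [Finset.mem_range] at hj
        simp only [hR']
        rw [if_pos (by omega), if_pos (by omega)]
      · simp only [hR']
        rw [if_pos (by omega), if_neg (by omega), show k + a = A + 1 from by omega]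
    · refine Finset.sum_congr rfl (fun i hi => ?_)
      simp only [hR']
      rw [if_neg (by omega), if_neg (by omega), show k + i + a = A + 1 + i from by omega,
        show k + i + 1 + a = A + 1 + i + 1 from by omega]
  have hmonge : c (v A) (u k) + c (u (k-1)) (v (A+1)) ≤
      c (u (k-1)) (u k) + c (v A) (v (A+1)) := by
    have hpq : u (k-1) ≤ v A := by
      by_cases hk2 : k = 1
      · rw [show k - 1 = 0 from by omega, hu0, ← hv0]
        exact hvmono 0 A (by omega) (by omega)
      · have hu1 : u (k-1) < v (a + (k-1)) := by
          by_contra hcon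
          push_neg at hcon
          have hmem : k ≤ k - 1 := hkmin ⟨by omega, by omega, hcon⟩
          omega
        calc u (k-1) ≤ v (a + (k-1)) := le_of_lt hu1
          _ ≤ v A := hvmono _ _ (by omega) (by omega)
    have hqV : v A < v (A+1) := hvinc A (by omega)
    have hVU : v (A+1) ≤ u k := by
      rw [show A + 1 = a + k from by omega]; exact hkle
    have hsp : s ≤ u (k-1) := by
      rw [← hu0]; exact humono 0 (k-1) (by omega) (by omega)
    have hUN : u k ≤ N := by
      have h1 : u k ≤ u m₁ := humono k m₁ hkm1 le_rfl
      rw [hum] at h1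
      omega
    rcases eq_or_lt_of_le hpq with he | hlt
    · rw [he]
    · rcases eq_or_lt_of_le hVU with he2 | hlt2
      · rw [he2]; linarith
      · have := hc (u (k-1)) (v A) (v (A+1)) (u k) hsp hlt hqV hlt2 hUN
        linarith
  have hkey : pathLen c m R + pathLen c M' R' ≤ pathLen c m₁ u + pathLen c m₂ v := by
    rw [hSR, hSR', hSu, hSv]
    linarith
  have h1 := huopt m R hRpath
  have h2 := huopt M' R' hR'path
  have h3 := huopt m₂ v ⟨hv0, hvm, hvinc, le_rfl, hn2⟩
  have h4 := hvopt m₁ u ⟨hu0, hum, huinc, le_rfl, hn2⟩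
  have hcast : (m:ℝ) * lam + (M':ℝ) * lam = (m₁:ℝ) * lam + (m₂:ℝ) * lam := by
    rw [← add_mul, ← add_mul]
    congr 1
    have : m + M' = m₁ + m₂ := by omega
    exact_mod_cast this
  have hRopt : pathLen c m R - m * lam = pathLen c m₁ u - m₁ * lam := by
    linarith
  refine ⟨hRpath, ?_, ?_⟩
  · intro m' w hw
    rw [hRopt]
    exact huopt m' w hw
  · intro w hw
    have h5 := huopt m w hw
    linarith
end
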